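/- arXiv:1609.05479 — 6 statements merged into one kernel-verified Lean document; each statement's English description precedes it below -/
import Mathlib

section
/- Let H be a separable Hilbert space and G : H → ℝ twice continuously differentiable with ∇G(m) = 0. Suppose there exist ε > 0 and λmin > 0 such that for all h in the ball B(m, ε), the Hessian Γ_h of G at h satisfies ⟨Γ_h u, u⟩ ≥ (λmin/2)‖u‖² for all u ∈ H. Then for every A > 0 and every h ∈ B(m, A), ⟨∇G(h), h − m⟩ ≥ c_A ‖h − m‖², where c_A := min{λmin/2, λmin·ε/(2A)}. -/
open Metric Filter MeasureTheory
open scoped RealInnerProductSpace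

/-- Local strong convexity of `G` near its critical point `m`
(Proposition `strongconv` of the paper). -/
theorem stmt_0
    {H : Type*} [NormedAddCommGroup H] [InnerProductSpace ℝ H] [CompleteSpace H]
    [TopologicalSpace.SeparableSpace H]
    (G : H → ℝ) (hGconv : ConvexOn ℝ Set.univ G) (hGsmooth : ContDiff ℝ 2 G)
    (m : H) (hm : gradient G m = 0)
    (Γ : H → H →L[ℝ] H) (hΓ : ∀ h, HasFDerivAt (gradient G) (Γ h) h)
    (ε lmin : ℝ) (hε : 0 < ε) (hlmin : 0 < lmin)
    (hstrong : ∀ h ∈ ball m ε, ∀ u : H, lmin / 2 * ‖u‖ ^ 2 ≤ ⟪Γ h u, u⟫) :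
    ∀ A > 0, ∀ h ∈ ball m A,
      min (lmin / 2) (lmin * ε / (2 * A)) * ‖h - m‖ ^ 2 ≤ ⟪gradient G h, h - m⟫ := by
  intro A hA h hh
  have hGdiff : Differentiable ℝ G := hGsmooth.differentiable (by norm_num)
  set v := h - m with hv
  rcases eq_or_ne v 0 with hv0 | hv0
  · simp [hv0, ← hv, show h = m by rwa [sub_eq_zero] at hv0, hm]
  have hr : 0 < ‖v‖ := norm_pos_iff.mpr hv0
  set r := ‖v‖ with hrdef
  have hrA : r < A := by
    have := mem_ball_iff_norm.mp hh
    simpa [hrdef, hv] using this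
  -- the line segment function
  set γ : ℝ → H := fun t => m + t • v with hγ
  have hγd : ∀ t : ℝ, HasDerivAt γ v t := by
    intro t
    simpa [hγ] using ((hasDerivAt_id t).smul_const v).const_add m
  -- φ t = ⟪∇G(γ t), v⟫ is the derivative of g t = G (γ t)
  set φ : ℝ → ℝ := fun t => ⟪gradient G (γ t), v⟫ with hφ
  have hφd : ∀ t : ℝ, HasDerivAt φ ⟪Γ (γ t) v, v⟫ t := by
    intro t
    have h1 : HasDerivAt (fun t => gradient G (γ t)) (Γ (γ t) v) t :=
      (hΓ (γ t)).comp_hasDerivAt t (hγd t)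
    have h2 : HasDerivAt (fun s => ⟪v, gradient G (γ s)⟫) ⟪v, Γ (γ t) v⟫ t := by
      exact (innerSL ℝ v).hasFDerivAt.comp_hasDerivAt t h1
    have heq : φ = fun s => ⟪v, gradient G (γ s)⟫ := funext fun s => real_inner_comm _ _
    rw [heq, real_inner_comm]
    exact h2
  -- g is convex and deriv g = φ
  set g : ℝ → ℝ := fun t => G (γ t) with hg
  have hgd : ∀ t : ℝ, HasDerivAt g (φ t) t := by
    intro t
    have h1 : HasFDerivAt G (fderiv ℝ G (γ t)) (γ t) := (hGdiff (γ t)).hasFDerivAt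
    have h2 := h1.comp_hasDerivAt t (hγd t)
    have h3 : fderiv ℝ G (γ t) v = ⟪gradient G (γ t), v⟫ := by
      rw [gradient]
      simp [InnerProductSpace.toDual_apply_apply]
    rw [h3] at h2; exact h2
  have hderivg : deriv g = φ := funext fun t => (hgd t).deriv
  have hgconv : ConvexOn ℝ Set.univ g := by
    refine ⟨convex_univ, ?_⟩
    intro x _ y _ a b ha hb hab
    have hb' : b = 1 - a := by linarith
    subst hb'
    have hγeq : γ (a * x + (1 - a) * y) = a • γ x + (1 - a) • γ y := by
      simp only [hγ]
      module
    have := hGconv.2 (Set.mem_univ (γ x)) (Set.mem_univ (γ y)) ha hb hab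
    calc g (a • x + (1 - a) • y) = G (a • γ x + (1 - a) • γ y) := by
          rw [hg]; simp only [smul_eq_mul] at hγeq ⊢; rw [hγeq]
      _ ≤ a * g x + (1 - a) * g y := by simpa [smul_eq_mul] using this
  -- monotonicity of φ = deriv g
  have hφmono : Monotone φ := by
    have := hgconv.monotoneOn_deriv (fun x _ => (hgd x).differentiableAt)
    rw [hderivg] at this
    exact fun x y hxy => this trivial trivial hxy
  -- set t₀
  set t₀ : ℝ := min 1 (ε / r) with ht₀
  have ht₀pos : 0 < t₀ := lt_min one_pos (div_pos hε hr)
  have ht₀le1 : t₀ ≤ 1 := min_le_left _ _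
  -- lower bound on φ t₀
  set c : ℝ := lmin / 2 * r ^ 2 with hc
  have key : ∀ t ∈ Set.Ioo (0:ℝ) t₀, c ≤ ⟪Γ (γ t) v, v⟫ := by
    intro t ht
    apply hstrong
    · rw [mem_ball_iff_norm]
      have : ‖γ t - m‖ = t * r := by
        simp [hγ, norm_smul, abs_of_pos ht.1, hrdef]
      rw [this]
      calc t * r < t₀ * r := by exact mul_lt_mul_of_pos_right ht.2 hr
        _ ≤ (ε / r) * r := mul_le_mul_of_nonneg_right (min_le_right _ _) hr.le
        _ = ε := div_mul_cancel₀ ε hr.ne'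
  have hd : ∀ t : ℝ, HasDerivAt (fun t => φ t - c * t) (⟪Γ (γ t) v, v⟫ - c) t := by
    intro t
    have := (hφd t).sub ((hasDerivAt_id t).const_mul c); rw [mul_one] at this; exact this
  have hψ : MonotoneOn (fun t => φ t - c * t) (Set.Icc 0 t₀) := by
    apply monotoneOn_of_deriv_nonneg (convex_Icc 0 t₀)
    · exact (continuous_iff_continuousAt.mpr fun s => (hd s).continuousAt).continuousOn
    · intro t _
      exact (hd t).differentiableAt.differentiableWithinAt
    · intro t ht
      rw [interior_Icc] at ht
      rw [(hd t).deriv]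
      have := key t ht
      linarith
  have hφ0 : φ 0 = 0 := by simp only [hφ, hγ, zero_smul, add_zero, hm, inner_zero_left]
  have hφt₀ : c * t₀ ≤ φ t₀ := by
    have := hψ (Set.left_mem_Icc.mpr ht₀pos.le)
      (Set.right_mem_Icc.mpr ht₀pos.le) ht₀pos.le
    simp only [hφ0, mul_zero, sub_zero, zero_sub] at this
    linarith
  -- conclude
  have hφ1 : φ t₀ ≤ φ 1 := hφmono ht₀le1
  have hfinal : c * t₀ ≤ ⟪gradient G h, v⟫ := by
    have : φ 1 = ⟪gradient G h, v⟫ := by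
      simp [hφ, hγ, hv]
    linarith [hφt₀, hφ1, this.symm.le]
  refine le_trans ?_ hfinal
  rw [hc, ht₀]
  have h1 : min (lmin / 2) (lmin * ε / (2 * A)) * r ^ 2
      = min (lmin / 2 * r ^ 2) (lmin * ε / (2 * A) * r ^ 2) := by
    rw [min_mul_of_nonneg _ _ (by positivity)]
  rw [h1]
  rcases le_or_gt 1 (ε / r) with hcase | hcase
  · rw [min_eq_left hcase, mul_one]
    exact min_le_left _ _
  · rw [min_eq_right hcase.le]
    refine le_trans (min_le_right _ _) ?_
    have h2 : lmin / 2 * r ^ 2 * (ε / r) = lmin * ε * r / 2 := by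
      field_simp
    rw [h2, div_mul_eq_mul_div, div_le_div_iff₀ (by positivity : (0:ℝ) < 2 * A) (by norm_num : (0:ℝ) < 2)]
    nlinarith [mul_le_mul_of_nonneg_left hrA.le (show (0:ℝ) ≤ lmin * ε * r by positivity)]
end

section
/- Let (Ω, F, (F_n), P) be a filtered probability space and (Z_n) a sequence of H-valued random variables adapted to (F_n), H a separable Hilbert space. Suppose there exist constants C, L₁ > 0 and a nonnegative deterministic sequence (γ_n) with Σγ_n² < ∞ such that E[‖Z_{n+1} − m‖² | F_n] ≤ (1 + 2C²γ_n²)‖Z_n − m‖² − 2γ_n ⟨Φ(Z_n), Z_n − m⟩ + 2γ_n² L₁ almost surely, where ⟨Φ(Z_n), Z_n − m⟩ ≥ 0 a.s. Then ‖Z_n − m‖² converges almost surely to a finite random variable, Σ_n γ_n⟨Φ(Z_n), Z_n − m⟩ < ∞ almost surely, and sup_n E[‖Z_n − m‖²] < ∞. -/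
open Metric Filter MeasureTheory
open scoped RealInnerProductSpace ENNReal

private theorem sm_div_const {Ω : Type*} {m : MeasurableSpace Ω} {f : Ω → ℝ}
    (hf : StronglyMeasurable[m] f) (c : ℝ) :
    StronglyMeasurable[m] (fun ω => f ω / c) := by
  simpa [div_eq_mul_inv] using hf.mul_const c⁻¹

theorem robbins_siegmund_aux
    {Ω : Type*} [m0 : MeasurableSpace Ω] (μ : Measure Ω) [IsProbabilityMeasure μ]
    (ℱ : Filtration ℕ m0)
    (V B : ℕ → Ω → ℝ) (a c : ℕ → ℝ)
    (ha : ∀ n, 0 ≤ a n) (hc : ∀ n, 0 ≤ c n)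
    (haS : Summable a) (hcS : Summable c)
    (hVadapt : ∀ n, StronglyMeasurable[ℱ n] (V n))
    (hVpos : ∀ n ω, 0 ≤ V n ω)
    (hVint : ∀ n, Integrable (V n) μ)
    (hBpos : ∀ n, ∀ᵐ ω ∂μ, 0 ≤ B n ω)
    (hrec : ∀ n, μ[V (n+1) | ℱ n] ≤ᵐ[μ]
       fun ω => (1 + a n) * V n ω - B n ω + c n) :
    (∀ᵐ ω ∂μ, ∃ l : ℝ, Tendsto (fun n => V n ω) atTop (nhds l)) ∧
    (∀ᵐ ω ∂μ, Summable (fun n => B n ω)) ∧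
    (∃ R : ℝ, ∀ n, ∫ ω, V n ω ∂μ ≤ R) := by
  classical
  set A := ∑' n, a n with hA
  set K := ∑' n, c n with hK
  have hA0 : 0 ≤ A := tsum_nonneg ha
  have hK0 : 0 ≤ K := tsum_nonneg hc
  set α : ℕ → ℝ := fun n => ∏ k ∈ Finset.range n, (1 + a k) with hα
  have hα1 : ∀ n, 1 ≤ α n := by
    intro n
    show (1:ℝ) ≤ ∏ k ∈ Finset.range n, (1 + a k)
    calc (1:ℝ) = ∏ _k ∈ Finset.range n, (1:ℝ) := by simp
      _ ≤ ∏ k ∈ Finset.range n, (1 + a k) :=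
        Finset.prod_le_prod (fun k _ => zero_le_one) (fun k _ => by linarith [ha k])
  have hαpos : ∀ n, 0 < α n := fun n => lt_of_lt_of_le one_pos (hα1 n)
  have hαsucc : ∀ n, α (n + 1) = α n * (1 + a n) := fun n => Finset.prod_range_succ _ n
  have hαmono : Monotone α := by
    refine monotone_nat_of_le_succ fun n => ?_
    rw [hαsucc n]
    nlinarith [hαpos n, ha n]
  have hαle : ∀ n, α n ≤ Real.exp A := by
    intro n
    calc α n ≤ ∏ k ∈ Finset.range n, Real.exp (a k) :=
          Finset.prod_le_prod (fun k _ => by linarith [ha k])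
            (fun k _ => by linarith [Real.add_one_le_exp (a k)])
      _ = Real.exp (∑ k ∈ Finset.range n, a k) := (Real.exp_sum _ _).symm
      _ ≤ Real.exp A := Real.exp_le_exp.2 (Summable.sum_le_tsum _ (fun k _ => ha k) haS)
  obtain ⟨αl, hαl⟩ : ∃ l, Tendsto α atTop (nhds l) :=
    ⟨_, tendsto_atTop_ciSup hαmono ⟨Real.exp A, fun x ⟨n, hn⟩ => hn ▸ hαle n⟩⟩
  have hTle : ∀ n, ∑ k ∈ Finset.range n, c k / α (k+1) ≤ K := by
    intro n
    calc ∑ k ∈ Finset.range n, c k / α (k+1) ≤ ∑ k ∈ Finset.range n, c k :=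
          Finset.sum_le_sum fun k _ => div_le_self (hc k) (hα1 (k+1))
      _ ≤ K := Summable.sum_le_tsum _ (fun k _ => hc k) hcS
  have hTsum : Summable (fun k => c k / α (k+1)) :=
    Summable.of_nonneg_of_le (fun k => div_nonneg (hc k) (hαpos _).le)
      (fun k => div_le_self (hc k) (hα1 _)) hcS
  -- generic lower bound for the compensator sums
  have hsumlb : ∀ (x : ℕ → ℝ), (∀ k, 0 ≤ x k) → ∀ n,
      -K ≤ ∑ k ∈ Finset.range n, (x k - c k) / α (k+1) := by
    intro x hx n
    have h1 : ∀ k ∈ Finset.range n, -(c k / α (k+1)) ≤ (x k - c k) / α (k+1) := by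
      intro k _
      rw [neg_div' (α (k+1)) (c k)]
      gcongr
      · exact (hαpos (k+1)).le
      · linarith [hx k]
    calc -K ≤ -(∑ k ∈ Finset.range n, c k / α (k+1)) := by linarith [hTle n]
      _ = ∑ k ∈ Finset.range n, -(c k / α (k+1)) := by rw [Finset.sum_neg_distrib]
      _ ≤ _ := Finset.sum_le_sum h1
  -- the measurable dominating increment
  set B' : ℕ → Ω → ℝ := fun n ω => (1 + a n) * V n ω + c n - (μ[V (n+1) | ℱ n]) ω with hB'
  have hB'meas : ∀ n, StronglyMeasurable[ℱ n] (B' n) := by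
    intro n
    exact (((hVadapt n).const_mul _).add_const _).sub stronglyMeasurable_condExp
  have hB'int : ∀ n, Integrable (B' n) μ := by
    intro n
    exact (((hVint n).const_mul _).add (integrable_const _)).sub integrable_condExp
  have hB'B : ∀ n, ∀ᵐ ω ∂μ, B n ω ≤ B' n ω := by
    intro n
    filter_upwards [hrec n] with ω hω
    simp only [hB']
    linarith [hω]
  have hB'pos : ∀ n, ∀ᵐ ω ∂μ, 0 ≤ B' n ω := by
    intro n
    filter_upwards [hB'B n, hBpos n] with ω h1 h2
    linarith
  have hcondexp : ∀ n ω, (μ[V (n+1) | ℱ n]) ω = (1 + a n) * V n ω + c n - B' n ω := by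
    intro n ω; simp [hB']
  -- the martingale
  set W : ℕ → Ω → ℝ := fun n ω => V n ω / α n
      + ∑ k ∈ Finset.range n, (B' k ω - c k) / α (k+1) with hW
  have hWadapt : StronglyAdapted ℱ W := by
    intro n
    refine (sm_div_const (hVadapt n) _).add ?_
    refine Finset.stronglyMeasurable_fun_sum _ fun k hk => ?_
    have hkn : ℱ k ≤ ℱ n := ℱ.mono (Finset.mem_range.1 hk).le
    exact sm_div_const (((hB'meas k).mono hkn).sub stronglyMeasurable_const) _
  have hWint : ∀ n, Integrable (W n) μ := by
    intro n
    refine ((hVint n).div_const _).add ?_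
    exact integrable_finset_sum _ fun k _ => ((hB'int k).sub (integrable_const _)).div_const _
  have hWmart : Martingale W ℱ μ := by
    refine martingale_nat hWadapt hWint fun n => ?_
    have hW1 : W (n+1) = (fun ω => V (n+1) ω / α (n+1))
        + fun ω => ∑ k ∈ Finset.range (n+1), (B' k ω - c k) / α (k+1) := rfl
    have hg : Integrable (fun ω => V (n+1) ω / α (n+1)) μ := (hVint (n+1)).div_const _
    have hRmeas : StronglyMeasurable[ℱ n]
        (fun ω => ∑ k ∈ Finset.range (n+1), (B' k ω - c k) / α (k+1)) := by
      refine Finset.stronglyMeasurable_fun_sum _ fun k hk => ?_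
      have hkn : ℱ k ≤ ℱ n := ℱ.mono (Nat.lt_succ_iff.1 (Finset.mem_range.1 hk))
      exact sm_div_const (((hB'meas k).mono hkn).sub stronglyMeasurable_const) _
    have hRint : Integrable
        (fun ω => ∑ k ∈ Finset.range (n+1), (B' k ω - c k) / α (k+1)) μ :=
      integrable_finset_sum _ fun k _ => ((hB'int k).sub (integrable_const _)).div_const _
    have hsmul : (fun ω => V (n+1) ω / α (n+1)) = (α (n+1))⁻¹ • V (n+1) := by
      funext ω; simp [div_eq_inv_mul]
    have h1 : μ[W (n+1) | ℱ n]
        =ᵐ[μ] μ[fun ω => V (n+1) ω / α (n+1) | ℱ n]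
          + μ[fun ω => ∑ k ∈ Finset.range (n+1), (B' k ω - c k) / α (k+1) | ℱ n] := by
      rw [hW1]; exact condExp_add hg hRint _
    have h2 : μ[fun ω => V (n+1) ω / α (n+1) | ℱ n]
        =ᵐ[μ] (α (n+1))⁻¹ • μ[V (n+1) | ℱ n] := by
      rw [hsmul]; exact condExp_smul _ _ _
    have h3 : μ[fun ω => ∑ k ∈ Finset.range (n+1), (B' k ω - c k) / α (k+1) | ℱ n]
        = fun ω => ∑ k ∈ Finset.range (n+1), (B' k ω - c k) / α (k+1) :=
      condExp_of_stronglyMeasurable (ℱ.le n) hRmeas hRint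
    refine EventuallyEq.symm (h1.trans ?_)
    rw [h3]
    filter_upwards [h2] with ω hω
    simp only [Pi.add_apply]
    rw [hω]
    simp only [Pi.smul_apply, smul_eq_mul, hcondexp n ω]
    rw [Finset.sum_range_succ]
    simp only [hW]
    have h1a : (0:ℝ) < 1 + a n := by linarith [ha n]
    have hαn := hαpos n
    rw [hαsucc n]
    field_simp
    ring
  -- lower bound for W
  have hWlb : ∀ n, ∀ᵐ ω ∂μ, -K ≤ W n ω := by
    intro n
    filter_upwards [ae_all_iff.2 hB'pos] with ω hω
    have hsum := hsumlb (fun k => B' k ω) hω n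
    have hV : 0 ≤ V n ω / α n := div_nonneg (hVpos n ω) (hαpos n).le
    simp only [hW]
    linarith
  -- expectations of W are constant
  have hWexp : ∀ n, ∫ ω, W n ω ∂μ = ∫ ω, V 0 ω ∂μ := by
    intro n
    have h0 : W 0 = V 0 := by
      funext ω
      simp [hW, hα]
    calc ∫ ω, W n ω ∂μ = ∫ ω, (μ[W n | ℱ 0]) ω ∂μ := (integral_condExp (ℱ.le 0)).symm
      _ = ∫ ω, W 0 ω ∂μ := integral_congr_ae (hWmart.condExp_ae_eq (Nat.zero_le n))
      _ = ∫ ω, V 0 ω ∂μ := by rw [h0]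
  -- L¹ bound
  set R₀ : ℝ := ∫ ω, V 0 ω ∂μ + 2 * K with hR₀
  have hbdd : ∀ n, eLpNorm (W n) 1 μ ≤ (R₀.toNNReal : ℝ≥0∞) := by
    intro n
    have hgint : Integrable (fun ω => W n ω + 2 * K) μ := (hWint n).add (integrable_const _)
    have hgnn : 0 ≤ᵐ[μ] fun ω => W n ω + 2 * K := by
      filter_upwards [hWlb n] with ω hω
      simp only [Pi.zero_apply]
      linarith
    have h1 : eLpNorm (W n) 1 μ ≤ eLpNorm (fun ω => W n ω + 2 * K) 1 μ := by
      refine eLpNorm_mono_ae ?_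
      filter_upwards [hWlb n] with ω hω
      rw [Real.norm_eq_abs, Real.norm_eq_abs, abs_of_nonneg (show (0:ℝ) ≤ W n ω + 2*K by linarith)]
      rcases abs_cases (W n ω) with ⟨h, _⟩ | ⟨h, _⟩ <;> linarith
    have h2 : eLpNorm (fun ω => W n ω + 2 * K) 1 μ = ENNReal.ofReal R₀ := by
      rw [eLpNorm_one_eq_lintegral_enorm]
      have hconv : ∫⁻ x, ‖W n x + 2*K‖ₑ ∂μ
          = ∫⁻ x, ENNReal.ofReal (W n x + 2*K) ∂μ := by
        refine lintegral_congr_ae ?_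
        filter_upwards [hgnn] with ω hω
        rw [← Real.enorm_eq_ofReal hω]
      rw [hconv, ← ofReal_integral_eq_lintegral_ofReal hgint hgnn]
      congr 1
      rw [integral_add (hWint n) (integrable_const _), hWexp n]
      simp [hR₀, measure_univ]
    calc eLpNorm (W n) 1 μ ≤ ENNReal.ofReal R₀ := h2 ▸ h1
      _ = (R₀.toNNReal : ℝ≥0∞) := rfl
  have hWconv := hWmart.submartingale.exists_ae_tendsto_of_bdd hbdd
  -- pointwise analysis
  have key : ∀ᵐ ω ∂μ, (∃ l, Tendsto (fun n => V n ω) atTop (nhds l)) ∧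
      Summable (fun n => B n ω) := by
    filter_upwards [hWconv, ae_all_iff.2 hB'pos, ae_all_iff.2 hB'B, ae_all_iff.2 hBpos]
      with ω hlW hB'0 hBB' hB0
    obtain ⟨l, hl⟩ := hlW
    obtain ⟨M, hM⟩ : ∃ M, ∀ n, W n ω ≤ M := by
      obtain ⟨M, hM⟩ := hl.bddAbove_range
      exact ⟨M, fun n => hM ⟨n, rfl⟩⟩
    have hsplit : ∀ n, ∑ k ∈ Finset.range n, (B' k ω - c k) / α (k+1)
        = (∑ k ∈ Finset.range n, B' k ω / α (k+1))
          - ∑ k ∈ Finset.range n, c k / α (k+1) := by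
      intro n
      rw [← Finset.sum_sub_distrib]
      exact Finset.sum_congr rfl fun k _ => sub_div _ _ _
    have he : ∀ n, W n ω = V n ω / α n
        + ((∑ k ∈ Finset.range n, B' k ω / α (k+1))
          - ∑ k ∈ Finset.range n, c k / α (k+1)) := by
      intro n
      simp only [hW]
      rw [hsplit n]
    have hSb : ∀ n, ∑ k ∈ Finset.range n, B' k ω / α (k+1) ≤ M + K := by
      intro n
      have hV : 0 ≤ V n ω / α n := div_nonneg (hVpos n ω) (hαpos n).le
      calc ∑ k ∈ Finset.range n, B' k ω / α (k+1)
          = W n ω - V n ω / α n + ∑ k ∈ Finset.range n, c k / α (k+1) := by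
            rw [he n]; ring
        _ ≤ M + K := add_le_add ((sub_le_self (W n ω) hV).trans (hM n)) (hTle n)
    have hSsum : Summable (fun k => B' k ω / α (k+1)) :=
      summable_of_sum_range_le (fun k => div_nonneg (hB'0 k) (hαpos _).le) hSb
    have hB'sum : Summable (fun k => B' k ω) := by
      refine Summable.of_nonneg_of_le hB'0 (fun k => ?_) (hSsum.mul_left (Real.exp A))
      calc B' k ω = B' k ω / α (k+1) * α (k+1) := (div_mul_cancel₀ _ (hαpos _).ne').symm
        _ ≤ B' k ω / α (k+1) * Real.exp A :=
            mul_le_mul_of_nonneg_left (hαle _) (div_nonneg (hB'0 k) (hαpos _).le)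
        _ = Real.exp A * (B' k ω / α (k+1)) := mul_comm _ _
    have hBsum : Summable (fun k => B k ω) := Summable.of_nonneg_of_le hB0 hBB' hB'sum
    have hS := hSsum.hasSum.tendsto_sum_nat
    have hT := hTsum.hasSum.tendsto_sum_nat
    have hVα : Tendsto (fun n => V n ω / α n) atTop
        (nhds (l - (∑' k, B' k ω / α (k+1)) + ∑' k, c k / α (k+1))) := by
      have heq : (fun n => V n ω / α n) = fun n => W n ω
          - (∑ k ∈ Finset.range n, B' k ω / α (k+1))
          + ∑ k ∈ Finset.range n, c k / α (k+1) := by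
        funext n
        rw [he n]
        ring
      rw [heq]
      exact (hl.sub hS).add hT
    refine ⟨⟨(l - (∑' k, B' k ω / α (k+1)) + ∑' k, c k / α (k+1)) * αl, ?_⟩, hBsum⟩
    have heq2 : (fun n => V n ω) = fun n => V n ω / α n * α n := by
      funext n; rw [div_mul_cancel₀ _ (hαpos n).ne']
    rw [heq2]
    exact hVα.mul hαl
  refine ⟨key.mono fun ω h => h.1, key.mono fun ω h => h.2,
    ⟨Real.exp A * (∫ ω, V 0 ω ∂μ + K), fun n => ?_⟩⟩
  -- moment bound
  have hint2 : ∀ k, Integrable (fun ω => (B' k ω - c k) / α (k+1)) μ :=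
    fun k => ((hB'int k).sub (integrable_const _)).div_const _
  have hWint_eq : ∫ ω, W n ω ∂μ = (∫ ω, V n ω ∂μ) / α n
      + ∑ k ∈ Finset.range n, ((∫ ω, B' k ω ∂μ) - c k) / α (k+1) := by
    calc ∫ ω, W n ω ∂μ
        = ∫ ω, (V n ω / α n + ∑ k ∈ Finset.range n, (B' k ω - c k) / α (k+1)) ∂μ := rfl
      _ = (∫ ω, V n ω / α n ∂μ)
          + ∫ ω, ∑ k ∈ Finset.range n, (B' k ω - c k) / α (k+1) ∂μ :=
            integral_add ((hVint n).div_const _) (integrable_finset_sum _ fun k _ => hint2 k)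
      _ = (∫ ω, V n ω ∂μ) / α n
          + ∑ k ∈ Finset.range n, ((∫ ω, B' k ω ∂μ) - c k) / α (k+1) := by
        rw [integral_div, integral_finset_sum _ fun k _ => hint2 k]
        congr 1
        refine Finset.sum_congr rfl fun k _ => ?_
        rw [integral_div, integral_sub (hB'int k) (integrable_const _), integral_const]
        simp [measure_univ]
  have hB'intnn : ∀ k, 0 ≤ ∫ ω, B' k ω ∂μ := fun k => integral_nonneg_of_ae (hB'pos k)
  have hlb := hsumlb (fun k => ∫ ω, B' k ω ∂μ) hB'intnn n
  have hV00 : 0 ≤ ∫ ω, V 0 ω ∂μ := integral_nonneg (hVpos 0)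
  have hdiv : (∫ ω, V n ω ∂μ) / α n ≤ ∫ ω, V 0 ω ∂μ + K := by
    have := hWexp n
    rw [hWint_eq] at this
    linarith
  have h1 : ∫ ω, V n ω ∂μ ≤ α n * (∫ ω, V 0 ω ∂μ + K) := by
    rw [div_le_iff₀ (hαpos n)] at hdiv
    linarith [hdiv]
  calc ∫ ω, V n ω ∂μ ≤ α n * (∫ ω, V 0 ω ∂μ + K) := h1
    _ ≤ Real.exp A * (∫ ω, V 0 ω ∂μ + K) :=
        mul_le_mul_of_nonneg_right (hαle n) (by linarith)

/-- Robbins–Siegmund step in the consistency proof of the stochastic gradient algorithm: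
a.s. convergence of `‖Z_n − m‖²`, a.s. summability of `γ_n⟨Φ(Z_n), Z_n − m⟩`, and a
uniform bound on the second moments. -/
theorem stmt_4
    {H : Type*} [NormedAddCommGroup H] [InnerProductSpace ℝ H] [CompleteSpace H]
    [TopologicalSpace.SeparableSpace H]
    {Ω : Type*} [m0 : MeasurableSpace Ω] (μ : MeasureTheory.Measure Ω)
    [IsProbabilityMeasure μ] (ℱ : Filtration ℕ m0)
    (Z : ℕ → Ω → H) (hadapt : ∀ n, StronglyMeasurable[ℱ n] (Z n))
    (m : H) (Φ : H → H)
    (C L₁ : ℝ) (hC : 0 < C) (hL₁ : 0 < L₁)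
    (γ : ℕ → ℝ) (hγpos : ∀ n, 0 ≤ γ n) (hγ2 : Summable (fun n => γ n ^ 2))
    (hpos : ∀ n, ∀ᵐ ω ∂μ, 0 ≤ ⟪Φ (Z n ω), Z n ω - m⟫)
    (hint : ∀ n, Integrable (fun ω => ‖Z n ω - m‖ ^ 2) μ)
    (hrec : ∀ n, μ[fun ω => ‖Z (n + 1) ω - m‖ ^ 2 | ℱ n] ≤ᵐ[μ]
        fun ω => (1 + 2 * C ^ 2 * γ n ^ 2) * ‖Z n ω - m‖ ^ 2
          - 2 * γ n * ⟪Φ (Z n ω), Z n ω - m⟫ + 2 * γ n ^ 2 * L₁) :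
    (∀ᵐ ω ∂μ, ∃ l : ℝ, Tendsto (fun n => ‖Z n ω - m‖ ^ 2) atTop (nhds l)) ∧
    (∀ᵐ ω ∂μ, Summable (fun n => γ n * ⟪Φ (Z n ω), Z n ω - m⟫)) ∧
    (∃ B : ℝ, ∀ n, ∫ ω, ‖Z n ω - m‖ ^ 2 ∂μ ≤ B) := by
  have hVadapt : ∀ n, StronglyMeasurable[ℱ n] (fun ω => ‖Z n ω - m‖ ^ 2) := by
    intro n
    have h1 : StronglyMeasurable[ℱ n] (fun ω => Z n ω - m) :=
      (hadapt n).sub stronglyMeasurable_const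
    have h2 := h1.norm
    simpa [pow_two, Pi.mul_def] using h2.mul h2
  have key := robbins_siegmund_aux μ ℱ (fun n ω => ‖Z n ω - m‖ ^ 2)
    (fun n ω => 2 * γ n * ⟪Φ (Z n ω), Z n ω - m⟫)
    (fun n => 2 * C ^ 2 * γ n ^ 2) (fun n => 2 * γ n ^ 2 * L₁)
    (fun n => by positivity) (fun n => by positivity)
    (hγ2.mul_left (2 * C ^ 2)) ((hγ2.mul_left 2).mul_right L₁)
    hVadapt (fun n ω => by positivity) hint
    (fun n => by
      filter_upwards [hpos n] with ω hω
      exact mul_nonneg (mul_nonneg two_pos.le (hγpos n)) hω)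
    (fun n => hrec n)
  refine ⟨key.1, key.2.1.mono (fun ω h => ?_), key.2.2⟩
  have heq : (fun n => γ n * ⟪Φ (Z n ω), Z n ω - m⟫)
      = fun n => (2:ℝ)⁻¹ * (2 * γ n * ⟪Φ (Z n ω), Z n ω - m⟫) := by
    funext n; ring
  rw [heq]
  exact h.mul_left _
end

section
/- For geometric quantiles: let H be a separable Hilbert space, v ∈ H with ‖v‖ < 1, X an H-valued integrable random variable, and G_v(h) := E[‖X − h‖ − ‖X‖] − ⟨h, v⟩. Then G_v is convex and G_v(h) → +∞ as ‖h‖ → ∞; in particular G_v attains a minimum on H. -/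
open Metric Filter MeasureTheory
open scoped RealInnerProductSpace

/-- A lower semicontinuous function attains its minimum on a nonempty compact set. -/
theorem aux_lsc_compact_min {β : Type*} [TopologicalSpace β] {s : Set β} (hs : IsCompact s)
    (hne : s.Nonempty) {f : β → ℝ} (hf : LowerSemicontinuous f) :
    ∃ x ∈ s, ∀ y ∈ s, f x ≤ f y := by
  by_contra hcon
  push_neg at hcon
  obtain ⟨t, hts, htfin, hcover⟩ := hs.elim_finite_subcover_image
    (fun x (_ : x ∈ s) => hf.isOpen_preimage (f x))
    (fun y hy => by
      obtain ⟨x, hx, hfx⟩ := hcon y hy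
      exact Set.mem_biUnion hx hfx)
  obtain ⟨y0, hy0⟩ := hne
  have hy0' := hcover hy0
  obtain ⟨x0, hx0t, _⟩ := Set.mem_iUnion₂.1 hy0'
  obtain ⟨a, hat, hamin⟩ := Set.exists_min_image t f htfin ⟨x0, hx0t⟩
  have ha' := hcover (hts hat)
  obtain ⟨b, hbt, hb⟩ := Set.mem_iUnion₂.1 ha'
  exact absurd (hamin b hbt) (not_le.2 hb)

/-- A function with an exact continuous minorant at every point is lower semicontinuous. -/
theorem aux_lsc_of_minorants {β : Type*} [TopologicalSpace β] {f : β → ℝ}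
    (h : ∀ x₀, ∃ g : β → ℝ, Continuous g ∧ g x₀ = f x₀ ∧ ∀ x, g x ≤ f x) :
    LowerSemicontinuous f := by
  intro x₀ c hc
  obtain ⟨g, hgc, hgx, hgle⟩ := h x₀
  have hopen : IsOpen {x | c < g x} := isOpen_lt continuous_const hgc
  have hmem : x₀ ∈ {x | c < g x} := by simpa [hgx] using hc
  filter_upwards [hopen.mem_nhds hmem] with x hx
  exact lt_of_lt_of_le hx (hgle x)

/-- The geometric quantile objective `G_v(h) = E[‖X − h‖ − ‖X‖] − ⟨h, v⟩` (with `‖v‖ < 1`)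
is convex and coercive, hence attains a minimum on `H`. -/
theorem stmt_13
    {H : Type*} [NormedAddCommGroup H] [InnerProductSpace ℝ H] [CompleteSpace H]
    [TopologicalSpace.SeparableSpace H]
    {Ω : Type*} [MeasurableSpace Ω] (μ : MeasureTheory.Measure Ω) [IsProbabilityMeasure μ]
    (X : Ω → H) (hX : Integrable X μ)
    (v : H) (hv : ‖v‖ < 1)
    (Gv : H → ℝ)
    (hGv : ∀ h : H, Gv h = (∫ ω, (‖X ω - h‖ - ‖X ω‖) ∂μ) - ⟪h, v⟫) :
    ConvexOn ℝ Set.univ Gv ∧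
    Tendsto Gv (Filter.comap (fun h : H => ‖h‖) atTop) atTop ∧
    ∃ mv : H, ∀ h : H, Gv mv ≤ Gv h := by
  classical
  borelize H
  have hvpos : (0 : ℝ) < 1 - ‖v‖ := by linarith
  set C : ℝ := ∫ ω, ‖X ω‖ ∂μ with hCdef
  have hC0 : 0 ≤ C := integral_nonneg fun ω => norm_nonneg _
  have hXn : Integrable (fun ω => ‖X ω‖) μ := hX.norm
  have hInt : ∀ h : H, Integrable (fun ω => ‖X ω - h‖ - ‖X ω‖) μ := fun h =>
    ((hX.sub (integrable_const h)).norm).sub hXn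
  -- lower (coercivity) bound
  have key : ∀ h : H, (1 - ‖v‖) * ‖h‖ - 2 * C ≤ Gv h := by
    intro h
    rw [hGv]
    have h1 : ‖h‖ - 2 * C ≤ ∫ ω, (‖X ω - h‖ - ‖X ω‖) ∂μ := by
      have e : ∫ ω, (‖h‖ - 2 * ‖X ω‖) ∂μ = ‖h‖ - 2 * C := by
        rw [integral_sub (integrable_const _) (hXn.const_mul 2), integral_const, probReal_univ,
          integral_const_mul]
        simp [hCdef]
      rw [← e]
      refine integral_mono ((integrable_const _).sub (hXn.const_mul 2)) (hInt h) fun ω => ?_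
      have t1 : ‖h‖ - ‖X ω‖ ≤ ‖h - X ω‖ := norm_sub_norm_le h (X ω)
      have t2 : ‖h - X ω‖ = ‖X ω - h‖ := norm_sub_rev h (X ω)
      simp only
      linarith
    have h2 : ⟪h, v⟫ ≤ ‖h‖ * ‖v‖ := real_inner_le_norm h v
    nlinarith [norm_nonneg h]
  -- convexity
  have conv : ConvexOn ℝ Set.univ Gv := by
    refine ⟨convex_univ, fun h₁ _ h₂ _ a b ha hb hab => ?_⟩
    simp only [smul_eq_mul]
    rw [hGv, hGv, hGv]
    have hpt : ∀ ω, ‖X ω - (a • h₁ + b • h₂)‖ - ‖X ω‖ ≤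
        a * (‖X ω - h₁‖ - ‖X ω‖) + b * (‖X ω - h₂‖ - ‖X ω‖) := by
      intro ω
      have hdec : X ω - (a • h₁ + b • h₂) = a • (X ω - h₁) + b • (X ω - h₂) := by
        calc X ω - (a • h₁ + b • h₂) = (a + b) • X ω - (a • h₁ + b • h₂) := by
              rw [hab, one_smul]
          _ = a • (X ω - h₁) + b • (X ω - h₂) := by
              rw [add_smul, smul_sub, smul_sub]; abel
      have hn : ‖X ω - (a • h₁ + b • h₂)‖ ≤ a * ‖X ω - h₁‖ + b * ‖X ω - h₂‖ := by
        rw [hdec]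
        refine (norm_add_le _ _).trans ?_
        rw [norm_smul, norm_smul, Real.norm_of_nonneg ha, Real.norm_of_nonneg hb]
      nlinarith [norm_nonneg (X ω)]
    have hintineq : ∫ ω, (‖X ω - (a • h₁ + b • h₂)‖ - ‖X ω‖) ∂μ ≤
        ∫ ω, (a * (‖X ω - h₁‖ - ‖X ω‖) + b * (‖X ω - h₂‖ - ‖X ω‖)) ∂μ :=
      integral_mono (hInt _) (((hInt h₁).const_mul a).add ((hInt h₂).const_mul b)) hpt
    rw [integral_add ((hInt h₁).const_mul a) ((hInt h₂).const_mul b), integral_const_mul,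
      integral_const_mul] at hintineq
    have hinner : ⟪a • h₁ + b • h₂, v⟫ = a * ⟪h₁, v⟫ + b * ⟪h₂, v⟫ := by
      rw [inner_add_left, real_inner_smul_left, real_inner_smul_left]
    rw [hinner]
    ring_nf
    ring_nf at hintineq
    linarith
  -- coercivity
  have coer : Tendsto Gv (Filter.comap (fun h : H => ‖h‖) atTop) atTop := by
    have t0 : Tendsto (fun h : H => ‖h‖) (Filter.comap (fun h : H => ‖h‖) atTop) atTop :=
      tendsto_comap
    have t1 : Tendsto (fun h : H => (1 - ‖v‖) * ‖h‖) (Filter.comap (fun h : H => ‖h‖) atTop)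
        atTop := t0.const_mul_atTop hvpos
    have t2 : Tendsto (fun h : H => (1 - ‖v‖) * ‖h‖ - 2 * C)
        (Filter.comap (fun h : H => ‖h‖) atTop) atTop :=
      tendsto_atTop_add_const_right _ (-(2 * C)) t1
    exact tendsto_atTop_mono key t2
  refine ⟨conv, coer, ?_⟩
  -- existence of a minimizer via weak compactness
  set φ : WeakDual ℝ H → H :=
    fun ℓ => (InnerProductSpace.toDual ℝ H).symm (WeakDual.toStrongDual ℓ) with hφ
  have hφinner : ∀ (ℓ : WeakDual ℝ H) (x : H), ⟪φ ℓ, x⟫ = ℓ x := by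
    intro ℓ x
    rw [hφ]
    simp [InnerProductSpace.toDual_symm_apply]
  -- subgradient inequality
  have subgrad : ∀ h₀ : H, ∃ w : H, ∀ h : H, Gv h₀ + ⟪h₀ - h, w + v⟫ ≤ Gv h := by
    intro h₀
    set u : Ω → H := fun ω => ‖X ω - h₀‖⁻¹ • (X ω - h₀) with hu
    have hgmeas : Measurable fun x : H => ‖x - h₀‖⁻¹ • (x - h₀) := by
      have m1 : Measurable fun x : H => x - h₀ := (continuous_id.sub continuous_const).measurable
      exact (m1.norm.inv).smul m1
    have humeas : AEStronglyMeasurable u μ :=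
      (hgmeas.comp_aemeasurable hX.aemeasurable).aestronglyMeasurable
    have hu1 : ∀ ω, ‖u ω‖ ≤ 1 := by
      intro ω
      rw [hu]
      simp only [norm_smul, norm_inv, norm_norm]
      rcases eq_or_ne ‖X ω - h₀‖ 0 with h0 | h0
      · simp [h0]
      · rw [inv_mul_cancel₀ h0]
    have huint : Integrable u μ :=
      Integrable.mono' (integrable_const 1) humeas (ae_of_all _ hu1)
    have hinnerid : ∀ ω, ⟪X ω - h₀, u ω⟫ = ‖X ω - h₀‖ := by
      intro ω
      rw [hu]
      simp only [real_inner_smul_right]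
      rcases eq_or_ne (X ω - h₀) 0 with h0 | h0
      · simp [h0]
      · rw [real_inner_self_eq_norm_mul_norm]
        have hn : ‖X ω - h₀‖ ≠ 0 := norm_ne_zero_iff.2 h0
        field_simp
    refine ⟨∫ ω, u ω ∂μ, fun h => ?_⟩
    have e1 : ∀ ω, ⟪X ω - h, u ω⟫ - ‖X ω‖ =
        (‖X ω - h₀‖ - ‖X ω‖) + ⟪h₀ - h, u ω⟫ := by
      intro ω
      have : X ω - h = (X ω - h₀) + (h₀ - h) := by abel
      rw [this, inner_add_left, hinnerid ω]
      ring
    have int_left : Integrable (fun ω => ⟪X ω - h, u ω⟫ - ‖X ω‖) μ := by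
      have : (fun ω => ⟪X ω - h, u ω⟫ - ‖X ω‖) =
          fun ω => (‖X ω - h₀‖ - ‖X ω‖) + ⟪h₀ - h, u ω⟫ := funext e1
      rw [this]
      exact (hInt h₀).add (huint.const_inner _)
    have eint : ∫ ω, (⟪X ω - h, u ω⟫ - ‖X ω‖) ∂μ =
        (∫ ω, (‖X ω - h₀‖ - ‖X ω‖) ∂μ) + ⟪h₀ - h, ∫ ω, u ω ∂μ⟫ := by
      rw [funext e1, integral_add (hInt h₀) (huint.const_inner _), integral_inner huint]
    have hmono : ∫ ω, (⟪X ω - h, u ω⟫ - ‖X ω‖) ∂μ ≤ ∫ ω, (‖X ω - h‖ - ‖X ω‖) ∂μ := by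
      refine integral_mono int_left (hInt h) fun ω => ?_
      have := real_inner_le_norm (X ω - h) (u ω)
      have h1 := hu1 ω
      have h2 : ‖X ω - h‖ * ‖u ω‖ ≤ ‖X ω - h‖ * 1 :=
        mul_le_mul_of_nonneg_left h1 (norm_nonneg _)
      simp only
      nlinarith
    rw [hGv h, hGv h₀]
    rw [eint] at hmono
    have hv1 : ⟪h₀ - h, (∫ ω, u ω ∂μ) + v⟫ =
        ⟪h₀ - h, ∫ ω, u ω ∂μ⟫ + (⟪h₀, v⟫ - ⟪h, v⟫) := by
      rw [inner_add_right, inner_sub_left, inner_sub_left]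
    linarith [hv1.le, hv1.ge]
  -- lower semicontinuity of `Gv ∘ φ` in the weak-star topology
  have lsc : LowerSemicontinuous fun ℓ : WeakDual ℝ H => Gv (φ ℓ) := by
    apply aux_lsc_of_minorants
    intro ℓ₀
    obtain ⟨w, hw⟩ := subgrad (φ ℓ₀)
    refine ⟨fun ℓ => (Gv (φ ℓ₀) + ⟪φ ℓ₀, w + v⟫) - ℓ (w + v), ?_, ?_, ?_⟩
    · exact continuous_const.sub (WeakDual.eval_continuous (w + v))
    · show Gv (φ ℓ₀) + ⟪φ ℓ₀, w + v⟫ - ℓ₀ (w + v) = Gv (φ ℓ₀)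
      rw [← hφinner ℓ₀ (w + v)]; ring
    · intro ℓ
      have h1 := hw (φ ℓ)
      have h2 : ⟪φ ℓ₀ - φ ℓ, w + v⟫ = ⟪φ ℓ₀, w + v⟫ - ℓ (w + v) := by
        rw [inner_sub_left, hφinner ℓ (w + v)]
      show Gv (φ ℓ₀) + ⟪φ ℓ₀, w + v⟫ - ℓ (w + v) ≤ Gv (φ ℓ)
      linarith [h2 ▸ h1]
  -- the weakly compact ball
  set R : ℝ := (2 * C + 1) / (1 - ‖v‖) with hR
  have hR0 : 0 ≤ R := div_nonneg (by linarith) hvpos.le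
  have hK : IsCompact (WeakDual.toStrongDual ⁻¹'
      Metric.closedBall (0 : StrongDual ℝ H) R) :=
    WeakDual.isCompact_closedBall 0 R
  have hmemiff : ∀ ℓ : WeakDual ℝ H,
      ℓ ∈ WeakDual.toStrongDual ⁻¹' Metric.closedBall (0 : StrongDual ℝ H) R ↔
      ‖φ ℓ‖ ≤ R := by
    intro ℓ
    have : ‖φ ℓ‖ = ‖WeakDual.toStrongDual ℓ‖ := by
      rw [hφ]; exact LinearIsometryEquiv.norm_map _ _
    simp [Metric.mem_closedBall, dist_zero_right, this]
  have h0mem : (0 : WeakDual ℝ H) ∈ WeakDual.toStrongDual ⁻¹'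
      Metric.closedBall (0 : StrongDual ℝ H) R := by
    rw [hmemiff]
    have : φ 0 = 0 := by rw [hφ]; simp
    rw [this]; simpa using hR0
  obtain ⟨ℓs, hℓs, hmin⟩ := aux_lsc_compact_min hK ⟨0, h0mem⟩ lsc
  have hGv0 : Gv 0 = 0 := by rw [hGv]; simp
  have hmin0 : Gv (φ ℓs) ≤ 0 := by
    have := hmin 0 h0mem
    have hφ0 : φ 0 = 0 := by rw [hφ]; simp
    rwa [hφ0, hGv0] at this
  refine ⟨φ ℓs, fun h => ?_⟩
  by_cases hh : ‖h‖ ≤ R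
  · set ℓh : WeakDual ℝ H := WeakDual.toStrongDual.symm (InnerProductSpace.toDual ℝ H h) with hℓh
    have hφh : φ ℓh = h := by
      rw [hφ, hℓh]; simp
    have hmemh : ℓh ∈ WeakDual.toStrongDual ⁻¹'
        Metric.closedBall (0 : StrongDual ℝ H) R := by
      rw [hmemiff, hφh]; exact hh
    have := hmin ℓh hmemh
    rwa [hφh] at this
  · push_neg at hh
    have h1 : (1 - ‖v‖) * R = 2 * C + 1 := by
      rw [hR, mul_div_cancel₀ _ hvpos.ne']
    have h2 := key h
    have h3 : (1 - ‖v‖) * R ≤ (1 - ‖v‖) * ‖h‖ :=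
      mul_le_mul_of_nonneg_left hh.le hvpos.le
    linarith
end

section
/- Let H be a Hilbert space, m ∈ H, Φ : H → H with ⟨Φ(h), h − m⟩ ≥ c·min{1, ε/‖h−m‖}·‖h−m‖² for constants c, ε > 0 (local strong convexity lower bound), and ‖Φ(h)‖² ≤ 2C²‖h−m‖² + 2L₁. Let γ_n = c_γn^{−α}, α ∈ (1/2,1). Then there exist a constant c' > 0 and a rank n₀ such that for all n ≥ n₀ and all h with ‖h − m‖ ≤ c' n^{1−α}: ‖h − m − γ_nΦ(h)‖² ≤ (1 − 3/n)‖h − m‖² + 2L₁γ_n². -/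
open Metric Filter MeasureTheory
open scoped RealInnerProductSpace

set_option maxHeartbeats 1000000 in
/-- Deterministic contraction estimate on the truncated event: there exist `c' > 0` and a
rank `n₀` such that for `n ≥ n₀` and `‖h − m‖ ≤ c' n^{1−α}`,
`‖h − m − γ_n Φ(h)‖² ≤ (1 − 3/n)‖h − m‖² + 2L₁γ_n²`. -/
theorem stmt_17
    {H : Type*} [NormedAddCommGroup H] [InnerProductSpace ℝ H] [CompleteSpace H]
    (m : H) (Φ : H → H)
    (c ε : ℝ) (hc : 0 < c) (hε : 0 < ε)
    (hlow : ∀ h : H, c * min 1 (ε / ‖h - m‖) * ‖h - m‖ ^ 2 ≤ ⟪Φ h, h - m⟫)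
    (C L₁ : ℝ) (hC : 0 < C) (hL₁ : 0 < L₁)
    (hΦ : ∀ h : H, ‖Φ h‖ ^ 2 ≤ 2 * C ^ 2 * ‖h - m‖ ^ 2 + 2 * L₁)
    (cγ α : ℝ) (hcγ : 0 < cγ) (hα : α ∈ Set.Ioo (1 / 2 : ℝ) 1)
    (γ : ℕ → ℝ) (hγ : ∀ n : ℕ, γ n = cγ * (n : ℝ) ^ (-α)) :
    ∃ c' > (0 : ℝ), ∃ n₀ : ℕ, ∀ n ≥ n₀, ∀ h : H, ‖h - m‖ ≤ c' * (n : ℝ) ^ (1 - α) →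
      ‖h - m - γ n • Φ h‖ ^ 2 ≤ (1 - 3 / (n : ℝ)) * ‖h - m‖ ^ 2 + 2 * L₁ * γ n ^ 2 := by
  obtain ⟨hα1, hα2⟩ := hα
  refine ⟨cγ * c * ε / 4, by positivity, ?_⟩
  have h1 : ∀ᶠ x : ℝ in atTop, 4 / (c * cγ) ≤ x ^ (1 - α) :=
    (tendsto_rpow_atTop (by linarith)).eventually_ge_atTop _
  have h2 : ∀ᶠ x : ℝ in atTop, 2 * C ^ 2 * cγ ^ 2 ≤ 5 * x ^ (2 * α - 1) := by
    have := (tendsto_rpow_atTop (y := 2 * α - 1) (by linarith)).eventually_ge_atTop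
      (2 * C ^ 2 * cγ ^ 2 / 5)
    filter_upwards [this] with x hx
    nlinarith
  have h3 : ∀ᶠ n : ℕ in atTop, 4 / (c * cγ) ≤ (n : ℝ) ^ (1 - α) ∧
      2 * C ^ 2 * cγ ^ 2 ≤ 5 * (n : ℝ) ^ (2 * α - 1) ∧ 1 ≤ n := by
    have := tendsto_natCast_atTop_atTop (R := ℝ)
    filter_upwards [this.eventually h1, this.eventually h2, eventually_ge_atTop 1] with n a b c
    exact ⟨a, b, c⟩
  obtain ⟨n₀, hn₀⟩ := eventually_atTop.1 h3
  refine ⟨n₀, fun n hn h hh => ?_⟩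
  obtain ⟨hA, hB, hn1⟩ := hn₀ n hn
  set N : ℝ := (n : ℝ) with hNdef
  have hN : 0 < N := by rw [hNdef]; exact_mod_cast (hn1 : 0 < n)
  have hNp : 0 < N ^ (1 - α) := Real.rpow_pos_of_pos hN _
  have hNm : 0 < N ^ (-α) := Real.rpow_pos_of_pos hN _
  set r : ℝ := ‖h - m‖ with hr
  have hr0 : 0 ≤ r := norm_nonneg _
  set K : ℝ := 4 / (cγ * N ^ (1 - α)) with hK
  have hK0 : 0 < K := by positivity
  have hKc : K ≤ c := by
    rw [hK, div_le_iff₀ (by positivity)]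
    rw [div_le_iff₀ (by positivity)] at hA
    nlinarith
  -- inner product lower bound
  have hip : K * r ^ 2 ≤ ⟪Φ h, h - m⟫ := by
    rcases eq_or_lt_of_le hr0 with h0 | h0
    · have := hlow h
      rw [← hr] at this
      rw [← h0] at this ⊢
      simpa using this
    · have hmin : K / c ≤ min 1 (ε / r) := by
        refine le_min ((div_le_one hc).2 hKc) ?_
        have hle : ε / (cγ * c * ε / 4 * N ^ (1 - α)) ≤ ε / r :=
          div_le_div_of_nonneg_left hε.le h0 hh
        calc K / c = ε / (cγ * c * ε / 4 * N ^ (1 - α)) := by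
              rw [hK]; field_simp
          _ ≤ ε / r := hle
      have := hlow h
      rw [← hr] at this
      calc K * r ^ 2 = c * (K / c) * r ^ 2 := by field_simp
        _ ≤ c * min 1 (ε / r) * r ^ 2 :=
              mul_le_mul_of_nonneg_right (mul_le_mul_of_nonneg_left hmin hc.le) (sq_nonneg r)
        _ ≤ _ := this
  -- arithmetic identities
  have hγn : γ n = cγ * N ^ (-α) := hγ n
  have hγpos : 0 < γ n := by rw [hγn]; positivity
  have key : N ^ (1 - α) = N ^ (-α) * N := by
    rw [show (1 - α) = -α + 1 by ring, Real.rpow_add hN, Real.rpow_one]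
  have hident1 : γ n * K = 4 / N := by
    rw [hγn, hK, key]
    field_simp
  have hident2 : 2 * C ^ 2 * γ n ^ 2 ≤ 5 / N := by
    rw [hγn]
    have e1 : N ^ (2 * α - 1) * (N ^ (-α)) ^ 2 = N⁻¹ := by
      rw [← Real.rpow_natCast (N ^ (-α)) 2, ← Real.rpow_mul hN.le, ← Real.rpow_add hN,
        ← Real.rpow_neg_one N]
      congr 1
      push_cast
      ring
    have e2 : 2 * C ^ 2 * cγ ^ 2 * (N ^ (-α)) ^ 2 ≤ 5 * (N ^ (2 * α - 1) * (N ^ (-α)) ^ 2) := by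
      nlinarith [sq_nonneg (N ^ (-α))]
    rw [e1] at e2
    rw [div_eq_mul_inv]
    nlinarith
  -- expand norm
  have hexp : ‖h - m - γ n • Φ h‖ ^ 2 =
      r ^ 2 - 2 * γ n * ⟪Φ h, h - m⟫ + γ n ^ 2 * ‖Φ h‖ ^ 2 := by
    rw [norm_sub_sq_real, real_inner_smul_right, norm_smul, real_inner_comm]
    simp [abs_of_pos hγpos, ← hr]
    ring
  rw [hexp]
  have hΦh := hΦ h
  rw [← hr] at hΦh
  have h8 : 2 * γ n * (K * r ^ 2) ≤ 2 * γ n * ⟪Φ h, h - m⟫ :=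
    mul_le_mul_of_nonneg_left hip (by positivity)
  have h8' : 2 * γ n * (K * r ^ 2) = 8 / N * r ^ 2 := by
    linear_combination 2 * r ^ 2 * hident1
  have hq : γ n ^ 2 * ‖Φ h‖ ^ 2 ≤ γ n ^ 2 * (2 * C ^ 2 * r ^ 2 + 2 * L₁) :=
    mul_le_mul_of_nonneg_left hΦh (sq_nonneg (γ n))
  have h5 : 2 * C ^ 2 * γ n ^ 2 * r ^ 2 ≤ 5 / N * r ^ 2 :=
    mul_le_mul_of_nonneg_right hident2 (sq_nonneg r)
  have h8'' : 8 / N * r ^ 2 ≤ 2 * γ n * ⟪Φ h, h - m⟫ := h8' ▸ h8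
  have hq' : γ n ^ 2 * ‖Φ h‖ ^ 2 ≤ 2 * C ^ 2 * γ n ^ 2 * r ^ 2 + 2 * L₁ * γ n ^ 2 := by
    have e0 : γ n ^ 2 * (2 * C ^ 2 * r ^ 2 + 2 * L₁) =
        2 * C ^ 2 * γ n ^ 2 * r ^ 2 + 2 * L₁ * γ n ^ 2 := by ring
    linarith [hq, e0]
  have e : (1 - 3 / N) * r ^ 2 = r ^ 2 - 8 / N * r ^ 2 + 5 / N * r ^ 2 := by ring
  linarith [h8'', hq', h5, e]
end

section
/- Let H be a Hilbert space and (Δ_n) a sequence in H satisfying Δ_{n+1} = (I − γ_nΓ)Δ_n − γ_nδ_n, where Γ is a bounded self-adjoint operator with spectrum in [λmin, C₀], λmin > 0, γ_n = c_γn^{−α} with α ∈ (0,1), and (δ_n) is a bounded sequence in H with ‖δ_n‖ → 0. Then ‖Δ_n‖ → 0; more precisely limsup_n ‖Δ_n‖ ≤ limsup_n ‖δ_n‖/λmin, so ‖Δ_n‖ = O(sup_{k≥n/2}‖δ_k‖). -/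
open Metric Filter MeasureTheory
open scoped RealInnerProductSpace


lemma cs_pos {H : Type*} [NormedAddCommGroup H] [InnerProductSpace ℝ H]
    (T : H →L[ℝ] H) (hsym : ∀ x y : H, ⟪T x, y⟫ = ⟪x, T y⟫)
    (hpos : ∀ x : H, 0 ≤ ⟪T x, x⟫) (x y : H) :
    ⟪T x, y⟫ ^ 2 ≤ ⟪T x, x⟫ * ⟪T y, y⟫ := by
  have key : ∀ t : ℝ, 0 ≤ ⟪T y, y⟫ * (t * t) + (2 * ⟪T x, y⟫) * t + ⟪T x, x⟫ := by
    intro t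
    have h := hpos (x + t • y)
    have hyx : ⟪T y, x⟫ = ⟪T x, y⟫ := by rw [hsym y x, real_inner_comm]
    have expand : ⟪T (x + t • y), x + t • y⟫
        = ⟪T y, y⟫ * (t * t) + (2 * ⟪T x, y⟫) * t + ⟪T x, x⟫ := by
      simp only [map_add, _root_.map_smul, inner_add_left, inner_add_right,
        real_inner_smul_left, real_inner_smul_right, hyx]
      ring
    linarith [expand ▸ h]
  have := discrim_le_zero key
  rw [discrim] at this
  nlinarith [this]

lemma norm_sq_le_pos {H : Type*} [NormedAddCommGroup H] [InnerProductSpace ℝ H]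
    (T : H →L[ℝ] H) (hsym : ∀ x y : H, ⟪T x, y⟫ = ⟪x, T y⟫)
    (hpos : ∀ x : H, 0 ≤ ⟪T x, x⟫) (x : H) :
    ‖T x‖ ^ 2 ≤ ‖T‖ * ⟪T x, x⟫ := by
  have h1 : ⟪T x, T x⟫ = ‖T x‖ ^ 2 := real_inner_self_eq_norm_sq (T x)
  have h2 := cs_pos T hsym hpos x (T x)
  have h3 : ⟪T (T x), T x⟫ ≤ ‖T‖ * ‖T x‖ * ‖T x‖ := by
    calc ⟪T (T x), T x⟫ ≤ ‖T (T x)‖ * ‖T x‖ := real_inner_le_norm _ _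
    _ ≤ ‖T‖ * ‖T x‖ * ‖T x‖ := by
        have := T.le_opNorm (T x)
        nlinarith [norm_nonneg (T x)]
  rcases eq_or_lt_of_le (norm_nonneg (T x)) with h0 | h0
  · rw [← h0]
    simpa using mul_nonneg (norm_nonneg T) (hpos x)
  · have h5 : ⟪T x, x⟫ * ⟪T (T x), T x⟫ ≤ ⟪T x, x⟫ * (‖T‖ * ‖T x‖ * ‖T x‖) :=
      mul_le_mul_of_nonneg_left h3 (hpos x)
    have h6 : (‖T x‖ ^ 2) ^ 2 ≤ ⟪T x, x⟫ * (‖T‖ * ‖T x‖ * ‖T x‖) := by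
      rw [← h1]; exact h2.trans h5
    nlinarith [h6, h0, mul_pos h0 h0]

lemma coercive_of_spectrum {H : Type*} [NormedAddCommGroup H] [InnerProductSpace ℝ H]
    [CompleteSpace H] [Nontrivial H]
    (Γ : H →L[ℝ] H) (hsa : IsSelfAdjoint Γ)
    (lmin C₀ : ℝ) (hspec : spectrum ℝ Γ ⊆ Set.Icc lmin C₀) (x : H) :
    lmin * ‖x‖ ^ 2 ≤ ⟪Γ x, x⟫ := by
  have hsym : ∀ x y : H, ⟪Γ x, y⟫ = ⟪x, Γ y⟫ := fun x y => hsa.isSymmetric x y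
  -- the set of Rayleigh values on the unit sphere
  set S : Set ℝ := (fun z => ⟪Γ z, z⟫) '' {z : H | ‖z‖ = 1} with hS
  obtain ⟨z₀, hz₀⟩ := exists_ne (0 : H)
  have hz₀n : ‖z₀‖ ≠ 0 := norm_ne_zero_iff.mpr hz₀
  have hunitnorm : ∀ z : H, z ≠ 0 → ‖(‖z‖⁻¹ • z)‖ = 1 := by
    intro z hz
    rw [norm_smul, norm_inv, norm_norm, inv_mul_cancel₀ (norm_ne_zero_iff.mpr hz)]
  have hSne : S.Nonempty := ⟨_, ⟨‖z₀‖⁻¹ • z₀, hunitnorm z₀ hz₀, rfl⟩⟩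
  have hSbdd : BddBelow S := by
    refine ⟨-‖Γ‖, ?_⟩
    rintro s ⟨z, hz, rfl⟩
    have h1 : |⟪Γ z, z⟫| ≤ ‖Γ z‖ * ‖z‖ := abs_real_inner_le_norm _ _
    have h2 := Γ.le_opNorm z
    simp only [Set.mem_setOf_eq] at hz
    rw [hz] at h1 h2
    simp only [mul_one] at h1 h2
    linarith [abs_le.mp (h1.trans h2)]
  set m : ℝ := sInf S with hm
  -- scaling of the quadratic form
  have hscale : ∀ (c : ℝ) (z : H), ⟪Γ (c • z), c • z⟫ = c ^ 2 * ⟪Γ z, z⟫ := by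
    intro c z
    rw [_root_.map_smul]
    rw [real_inner_smul_left, real_inner_smul_right]
    ring
  -- m * ‖z‖^2 ≤ Q z for all z
  have hmle : ∀ z : H, m * ‖z‖ ^ 2 ≤ ⟪Γ z, z⟫ := by
    intro z
    rcases eq_or_ne z 0 with rfl | hz
    · simp
    · have hzn : ‖z‖ ≠ 0 := norm_ne_zero_iff.mpr hz
      have h1 : m ≤ ⟪Γ (‖z‖⁻¹ • z), ‖z‖⁻¹ • z⟫ := csInf_le hSbdd ⟨_, hunitnorm z hz, rfl⟩
      rw [hscale] at h1
      have h2 : (0:ℝ) < ‖z‖ ^ 2 := by positivity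
      rw [inv_pow] at h1
      calc m * ‖z‖ ^ 2 ≤ ((‖z‖ ^ 2)⁻¹ * ⟪Γ z, z⟫) * ‖z‖ ^ 2 :=
            mul_le_mul_of_nonneg_right h1 h2.le
        _ = ⟪Γ z, z⟫ := by field_simp
  -- main claim : lmin ≤ m
  rcases le_or_gt lmin m with hlm | hlm
  · calc lmin * ‖x‖ ^ 2 ≤ m * ‖x‖ ^ 2 := by nlinarith [sq_nonneg ‖x‖]
      _ ≤ ⟪Γ x, x⟫ := hmle x
  · -- contradiction : m < lmin would be in the resolvent set but is approx eigenvalue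
    exfalso
    have hmnot : m ∉ spectrum ℝ Γ := fun h => absurd (hspec h).1 (not_le.mpr hlm)
    rw [spectrum.notMem_iff] at hmnot
    have hmnot' : IsUnit (Γ - algebraMap ℝ (H →L[ℝ] H) m) := by
      have := hmnot.neg
      rwa [neg_sub] at this
    obtain ⟨U, hU⟩ := hmnot'
    set T : H →L[ℝ] H := Γ - algebraMap ℝ (H →L[ℝ] H) m with hT
    set c : ℝ := ‖((U⁻¹ : (H →L[ℝ] H)ˣ) : H →L[ℝ] H)‖ with hc
    have hinv : ∀ z : H, ‖z‖ ≤ c * ‖T z‖ := by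
      intro z
      have h1 : ((U⁻¹ : (H →L[ℝ] H)ˣ) : H →L[ℝ] H) (T z) = z := by
        rw [← hU]
        have : ((U⁻¹ : (H →L[ℝ] H)ˣ) : H →L[ℝ] H) * (U : H →L[ℝ] H) = 1 := U.inv_mul
        calc ((U⁻¹ : (H →L[ℝ] H)ˣ) : H →L[ℝ] H) ((U : H →L[ℝ] H) z)
            = (((U⁻¹ : (H →L[ℝ] H)ˣ) : H →L[ℝ] H) * (U : H →L[ℝ] H)) z := rfl
          _ = z := by rw [this]; rfl
      calc ‖z‖ = ‖((U⁻¹ : (H →L[ℝ] H)ˣ) : H →L[ℝ] H) (T z)‖ := by rw [h1]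
        _ ≤ c * ‖T z‖ := ContinuousLinearMap.le_opNorm _ _
    -- T applied : T z = Γ z - m • z
    have hTapp : ∀ z : H, T z = Γ z - m • z := by
      intro z
      simp [hT, Algebra.algebraMap_eq_smul_one, ContinuousLinearMap.sub_apply,
        ContinuousLinearMap.smul_apply, ContinuousLinearMap.one_apply]
    have hTinner : ∀ z : H, ⟪T z, z⟫ = ⟪Γ z, z⟫ - m * ‖z‖ ^ 2 := by
      intro z
      rw [hTapp, inner_sub_left, real_inner_smul_left, real_inner_self_eq_norm_sq]
    have hTsym : ∀ z w : H, ⟪T z, w⟫ = ⟪z, T w⟫ := by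
      intro z w
      rw [hTapp, hTapp, inner_sub_left, inner_sub_right, hsym,
        real_inner_smul_left, real_inner_smul_right]
    have hTpos : ∀ z : H, 0 ≤ ⟪T z, z⟫ := by
      intro z
      rw [hTinner]
      linarith [hmle z]
    have hc0 : 0 < c := by
      rcases le_or_gt c 0 with h | h
      · exfalso
        have h1 := hinv z₀
        have h2 : c * ‖T z₀‖ ≤ 0 := mul_nonpos_of_nonpos_of_nonneg h (norm_nonneg _)
        have := norm_pos_iff.mpr hz₀
        linarith
      · exact h
    -- pick an almost-minimizing unit vector
    set ε : ℝ := 1 / (c ^ 2 * (‖T‖ + 1)) with hε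
    have hεpos : 0 < ε := by positivity
    obtain ⟨s, ⟨z, hz1, rfl⟩, hslt⟩ := exists_lt_of_csInf_lt hSne (lt_add_of_pos_right m hεpos)
    simp only [Set.mem_setOf_eq] at hz1
    have h1 : ⟪T z, z⟫ < ε := by rw [hTinner, hz1]; simp only [one_pow, mul_one]; linarith
    have h2 : ‖T z‖ ^ 2 ≤ ‖T‖ * ⟪T z, z⟫ := norm_sq_le_pos T hTsym hTpos z
    have h3 : 1 ≤ c * ‖T z‖ := by have := hinv z; rwa [hz1] at this
    have h4 : 1 ≤ c ^ 2 * ‖T z‖ ^ 2 := by nlinarith [norm_nonneg (T z)]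
    have h5 : c ^ 2 * (‖T‖ + 1) * ε = 1 := by
      rw [hε]; field_simp
    nlinarith [norm_nonneg T, hTpos z, sq_nonneg c, mul_pos (mul_pos hc0 hc0) hεpos]

/-- Stabilization lemma: if `Δ_{n+1} = (I − γ_nΓ)Δ_n − γ_nδ_n` with `Γ` self-adjoint with
spectrum in `[λmin, C₀]`, `λmin > 0`, `γ_n = c_γ n^{−α}`, and `‖δ_n‖ → 0` with `(δ_n)`
bounded, then `Δ_n → 0` and `limsup ‖Δ_n‖ ≤ limsup ‖δ_n‖ / λmin`. -/
theorem stmt_18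
    {H : Type*} [NormedAddCommGroup H] [InnerProductSpace ℝ H] [CompleteSpace H]
    (Γ : H →L[ℝ] H) (hsa : IsSelfAdjoint Γ)
    (lmin C₀ : ℝ) (hlmin : 0 < lmin)
    (hspec : spectrum ℝ Γ ⊆ Set.Icc lmin C₀)
    (cγ α : ℝ) (hcγ : 0 < cγ) (hα : α ∈ Set.Ioo (0 : ℝ) 1)
    (γ : ℕ → ℝ) (hγ : ∀ n : ℕ, γ n = cγ * (n : ℝ) ^ (-α))
    (Δ δv : ℕ → H)
    (hrec : ∀ n, Δ (n + 1) = Δ n - γ n • Γ (Δ n) - γ n • δv n)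
    (hbdd : ∃ D : ℝ, ∀ n, ‖δv n‖ ≤ D)
    (hδ0 : Tendsto (fun n => ‖δv n‖) atTop (nhds 0)) :
    Tendsto Δ atTop (nhds 0) ∧
    Filter.limsup (fun n => ‖Δ n‖) atTop ≤ Filter.limsup (fun n => ‖δv n‖) atTop / lmin := by
  suffices key : Tendsto (fun n => ‖Δ n‖) atTop (nhds 0) by
    refine ⟨tendsto_zero_iff_norm_tendsto_zero.mpr key, ?_⟩
    rw [hδ0.limsup_eq, zero_div, key.limsup_eq]
  rcases subsingleton_or_nontrivial H with hsub | hnt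
  · have hz : ∀ n, ‖Δ n‖ = 0 := fun n => by
      rw [Subsingleton.elim (Δ n) 0, norm_zero]
    have : (fun n => ‖Δ n‖) = fun _ => (0:ℝ) := funext hz
    rw [this]
    exact tendsto_const_nhds
  -- nontrivial case
  have hsym : ∀ x y : H, ⟪Γ x, y⟫ = ⟪x, Γ y⟫ := fun x y => hsa.isSymmetric x y
  have hcoer : ∀ x : H, lmin * ‖x‖ ^ 2 ≤ ⟪Γ x, x⟫ :=
    coercive_of_spectrum Γ hsa lmin C₀ hspec
  have hΓpos : ∀ x : H, 0 ≤ ⟪Γ x, x⟫ := fun x =>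
    le_trans (by positivity) (hcoer x)
  have hΓsq : ∀ x : H, ‖Γ x‖ ^ 2 ≤ ‖Γ‖ * ⟪Γ x, x⟫ := norm_sq_le_pos Γ hsym hΓpos
  -- contraction estimate
  have hcontr : ∀ g : ℝ, 0 ≤ g → g * ‖Γ‖ ≤ 1 → g * lmin ≤ 1 →
      ∀ x : H, ‖x - g • Γ x‖ ≤ (1 - g * lmin / 2) * ‖x‖ := by
    intro g hg hg1 hg2 x
    have hQ := hcoer x
    have hQ0 := hΓpos x
    have hsq := hΓsq x
    have hnx : (0:ℝ) ≤ ‖x‖ := norm_nonneg x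
    have expand : ‖x - g • Γ x‖ ^ 2
        = ‖x‖ ^ 2 - 2 * g * ⟪Γ x, x⟫ + g ^ 2 * ‖Γ x‖ ^ 2 := by
      rw [norm_sub_sq_real, norm_smul, real_inner_smul_right,
        real_inner_comm x (Γ x), Real.norm_eq_abs, mul_pow, sq_abs]
      ring
    have h2 : (0:ℝ) ≤ 1 - g * lmin / 2 := by nlinarith
    have h1 : ‖x - g • Γ x‖ ^ 2 ≤ ((1 - g * lmin / 2) * ‖x‖) ^ 2 := by
      rw [expand, mul_pow]
      nlinarith [mul_le_mul_of_nonneg_left hsq (sq_nonneg g),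
        mul_le_mul_of_nonneg_right hg1 (mul_nonneg hg hQ0),
        mul_le_mul_of_nonneg_left hQ hg, sq_nonneg (g * lmin * ‖x‖)]
    exact (pow_le_pow_iff_left₀ (norm_nonneg _) (mul_nonneg h2 hnx) two_ne_zero).mp h1
  -- properties of γ
  have hγ0 : ∀ n, 0 ≤ γ n := by
    intro n; rw [hγ]; positivity
  have hγto0 : Tendsto γ atTop (nhds 0) := by
    have h1 : Tendsto (fun n : ℕ => ((n:ℝ)) ^ (-α)) atTop (nhds 0) :=
      (tendsto_rpow_neg_atTop hα.1).comp tendsto_natCast_atTop_atTop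
    have h2 := h1.const_mul cγ
    rw [mul_zero] at h2
    exact h2.congr fun n => (hγ n).symm
  have hdiv : Tendsto (fun n => ∑ k ∈ Finset.range n, γ k) atTop atTop := by
    have hns : ¬ Summable (fun n : ℕ => (n:ℝ) ^ (-α)) := by
      rw [Real.summable_nat_rpow]
      linarith [hα.2]
    have hns2 : ¬ Summable γ := by
      intro h
      apply hns
      refine (h.mul_left cγ⁻¹).congr fun n => ?_
      rw [hγ]
      field_simp
    exact (not_summable_iff_tendsto_nat_atTop_of_nonneg hγ0).mp hns2
  -- the ε-argument
  rw [Metric.tendsto_nhds]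
  intro ε hε
  set e : ℝ := ε / 2 with he_def
  have he : 0 < e := by positivity
  have hev1 : ∀ᶠ n in atTop, γ n * ‖Γ‖ ≤ 1 := by
    have := (hγto0.mul_const ‖Γ‖)
    rw [zero_mul] at this
    exact this.eventually_le_const one_pos
  have hev2 : ∀ᶠ n in atTop, γ n * lmin ≤ 1 := by
    have := (hγto0.mul_const lmin)
    rw [zero_mul] at this
    exact this.eventually_le_const one_pos
  have hev3 : ∀ᶠ n in atTop, ‖δv n‖ ≤ lmin / 2 * e :=
    hδ0.eventually_le_const (by positivity)
  obtain ⟨N, hN⟩ := eventually_atTop.mp (hev1.and (hev2.and hev3))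
  set b : ℕ → ℝ := fun n => γ n * (lmin / 2) with hb
  have hb0 : ∀ n, 0 ≤ b n := fun n => by
    rw [hb]; exact mul_nonneg (hγ0 n) (by positivity)
  have hbn1 : ∀ n ≥ N, b n ≤ 1 := by
    intro n hn
    have h2 := (hN n hn).2.1
    rw [hb]
    nlinarith
  have step : ∀ n ≥ N, ‖Δ (n+1)‖ ≤ (1 - b n) * ‖Δ n‖ + b n * e := by
    intro n hn
    obtain ⟨h1, h2, h3⟩ := hN n hn
    have hco := hcontr (γ n) (hγ0 n) h1 h2 (Δ n)
    have htri : ‖Δ (n+1)‖ ≤ ‖Δ n - γ n • Γ (Δ n)‖ + ‖γ n • δv n‖ := by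
      rw [hrec n]; exact norm_sub_le _ _
    have hδn : ‖γ n • δv n‖ ≤ b n * e := by
      rw [norm_smul, Real.norm_eq_abs, abs_of_nonneg (hγ0 n), hb]
      calc γ n * ‖δv n‖ ≤ γ n * (lmin / 2 * e) :=
            mul_le_mul_of_nonneg_left h3 (hγ0 n)
        _ = γ n * (lmin / 2) * e := by ring
    have hfact : (1 - γ n * lmin / 2) = 1 - b n := by rw [hb]; ring
    calc ‖Δ (n+1)‖ ≤ ‖Δ n - γ n • Γ (Δ n)‖ + ‖γ n • δv n‖ := htri
      _ ≤ (1 - b n) * ‖Δ n‖ + b n * e := by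
          rw [← hfact]; exact add_le_add hco hδn
  set u : ℕ → ℝ := fun n => max (‖Δ n‖ - e) 0 with hu
  have hu0 : ∀ n, 0 ≤ u n := fun n => le_max_right _ _
  have huΔ : ∀ n, ‖Δ n‖ - e ≤ u n := fun n => le_max_left _ _
  have hustep : ∀ n ≥ N, u (n+1) ≤ (1 - b n) * u n := by
    intro n hn
    have h1b : (0:ℝ) ≤ 1 - b n := by linarith [hbn1 n hn]
    apply max_le
    · have hs := step n hn
      have := mul_le_mul_of_nonneg_left (huΔ n) h1b
      nlinarith [hb0 n, he]
    · exact mul_nonneg h1b (hu0 n)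
  have hdecay : ∀ n, N ≤ n → u n ≤ Real.exp (-(∑ k ∈ Finset.Ico N n, b k)) * u N := by
    intro n hn
    induction n, hn using Nat.le_induction with
    | base => simp
    | succ n hn ih =>
      have hexp : (1 - b n) ≤ Real.exp (-(b n)) := by
        have := Real.add_one_le_exp (-(b n)); linarith
      calc u (n+1) ≤ (1 - b n) * u n := hustep n hn
        _ ≤ Real.exp (-(b n)) * u n := mul_le_mul_of_nonneg_right hexp (hu0 n)
        _ ≤ Real.exp (-(b n)) * (Real.exp (-(∑ k ∈ Finset.Ico N n, b k)) * u N) :=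
            mul_le_mul_of_nonneg_left ih (Real.exp_nonneg _)
        _ = Real.exp (-(∑ k ∈ Finset.Ico N (n+1), b k)) * u N := by
            rw [Finset.sum_Ico_succ_top hn, neg_add, Real.exp_add]
            ring
  have htends : Tendsto (fun n => Real.exp (-(∑ k ∈ Finset.Ico N n, b k)) * u N)
      atTop (nhds 0) := by
    have hdivb : Tendsto (fun n => ∑ k ∈ Finset.range n, b k) atTop atTop := by
      have h1 := hdiv.atTop_mul_const (show (0:ℝ) < lmin / 2 by linarith)
      refine h1.congr fun n => ?_
      rw [Finset.sum_mul]
    have hsub : Tendsto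
        (fun n => ∑ k ∈ Finset.range n, b k + -(∑ k ∈ Finset.range N, b k))
        atTop atTop := tendsto_atTop_add_const_right atTop _ hdivb
    have hsum : Tendsto (fun n => ∑ k ∈ Finset.Ico N n, b k) atTop atTop := by
      refine hsub.congr' ?_
      filter_upwards [eventually_ge_atTop N] with n hn
      rw [Finset.sum_Ico_eq_sub _ hn, sub_eq_add_neg]
    have hexp : Tendsto (fun n => Real.exp (-(∑ k ∈ Finset.Ico N n, b k)))
        atTop (nhds 0) :=
      Real.tendsto_exp_atBot.comp (tendsto_neg_atTop_atBot.comp hsum)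
    have := hexp.mul_const (u N)
    rwa [zero_mul] at this
  have huto0 : Tendsto u atTop (nhds 0) := by
    refine squeeze_zero' (Eventually.of_forall hu0) ?_ htends
    filter_upwards [eventually_ge_atTop N] with n hn
    exact hdecay n hn
  filter_upwards [huto0.eventually_lt_const he] with n hn
  rw [Real.dist_eq, sub_zero, abs_of_nonneg (norm_nonneg _)]
  have := huΔ n
  rw [he_def] at *
  linarith
end

section
/- Robbins–Siegmund theorem: let (V_n), (a_n), (B_n), (c_n) be nonnegative adapted real-valued sequences on a filtered probability space with E[V_{n+1} | F_n] ≤ (1 + a_n)V_n − B_n + c_n almost surely for all n, and Σ a_n < ∞, Σ c_n < ∞ almost surely. Then (V_n) converges almost surely to a finite random variable and Σ_n B_n < ∞ almost surely. -/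
open Metric Filter MeasureTheory
open scoped RealInnerProductSpace
open scoped Topology ENNReal NNReal

/-- The Robbins–Siegmund theorem: if `E[V_{n+1}|F_n] ≤ (1 + a_n)V_n − B_n + c_n` with all
sequences nonnegative and adapted, and `Σ a_n < ∞`, `Σ c_n < ∞` a.s., then `V_n` converges
a.s. to a finite random variable and `Σ B_n < ∞` a.s. -/
theorem stmt_19
    {Ω : Type*} [m0 : MeasurableSpace Ω] (μ : MeasureTheory.Measure Ω)
    [IsProbabilityMeasure μ] (ℱ : Filtration ℕ m0)
    (V a B c : ℕ → Ω → ℝ)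
    (hVadapt : ∀ n, StronglyMeasurable[ℱ n] (V n))
    (haadapt : ∀ n, StronglyMeasurable[ℱ n] (a n))
    (hBadapt : ∀ n, StronglyMeasurable[ℱ n] (B n))
    (hcadapt : ∀ n, StronglyMeasurable[ℱ n] (c n))
    (hVint : ∀ n, Integrable (V n) μ)
    (hV0 : ∀ n ω, 0 ≤ V n ω) (ha0 : ∀ n ω, 0 ≤ a n ω)
    (hB0 : ∀ n ω, 0 ≤ B n ω) (hc0 : ∀ n ω, 0 ≤ c n ω)
    (hrec : ∀ n, μ[V (n + 1) | ℱ n] ≤ᵐ[μ]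
        fun ω => (1 + a n ω) * V n ω - B n ω + c n ω)
    (hsa : ∀ᵐ ω ∂μ, Summable (fun n => a n ω))
    (hsc : ∀ᵐ ω ∂μ, Summable (fun n => c n ω)) :
    ∀ᵐ ω ∂μ, (∃ l : ℝ, Tendsto (fun n => V n ω) atTop (nhds l)) ∧
      Summable (fun n => B n ω) := by
  classical
  -- the compensating product
  set al : ℕ → Ω → ℝ := fun n ω => ∏ k ∈ Finset.range n, (1 + a k ω) with hal
  set U : ℕ → Ω → ℝ := fun n ω => (al n ω)⁻¹ * V n ω with hU
  set S : ℕ → Ω → ℝ := fun n ω => ∑ k ∈ Finset.range n, (al (k + 1) ω)⁻¹ * c k ω with hSdef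
  set T : ℕ → Ω → ℝ := fun n ω => ∑ k ∈ Finset.range n, (al (k + 1) ω)⁻¹ * B k ω with hTdef
  set X : ℕ → Ω → ℝ := fun n ω => U n ω + T n ω - S n ω with hX
  set e : ℕ → ℕ → Ω → ℝ := fun M n ω => if S (n + 1) ω ≤ (M : ℝ) then (1 : ℝ) else 0 with he
  set Y : ℕ → ℕ → Ω → ℝ := fun M n ω => V 0 ω + ∑ k ∈ Finset.range n,
      e M k ω * (U (k + 1) ω + (al (k + 1) ω)⁻¹ * (B k ω - c k ω) - U k ω) with hY
  set P : ℕ → ℕ → Ω → ℝ := fun M n ω => (e M n ω * (al (n + 1) ω)⁻¹) * V (n + 1) ω with hP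
  set Q : ℕ → ℕ → Ω → ℝ := fun M n ω =>
      e M n ω * ((al (n + 1) ω)⁻¹ * (B n ω - c n ω) - U n ω) with hQ
  -- basic pointwise facts
  have hal1 : ∀ n ω, (1 : ℝ) ≤ al n ω := by
    intro n ω
    simp only [hal]
    calc (1 : ℝ) = ∏ _k ∈ Finset.range n, (1 : ℝ) := by simp
      _ ≤ ∏ k ∈ Finset.range n, (1 + a k ω) :=
        Finset.prod_le_prod (fun k _ => zero_le_one) (fun k _ => by linarith [ha0 k ω])
  have hal_pos : ∀ n ω, (0 : ℝ) < al n ω := fun n ω => lt_of_lt_of_le one_pos (hal1 n ω)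
  have hal_succ : ∀ n ω, al (n + 1) ω = al n ω * (1 + a n ω) := fun n ω =>
    Finset.prod_range_succ _ n
  have hinv0 : ∀ n ω, (0 : ℝ) ≤ (al n ω)⁻¹ := fun n ω => inv_nonneg.2 (hal_pos n ω).le
  have hinv1 : ∀ n ω, (al n ω)⁻¹ ≤ 1 := fun n ω => by
    rw [inv_le_one_iff₀]; right; exact hal1 n ω
  have hkey : ∀ n ω, (al (n + 1) ω)⁻¹ * (1 + a n ω) = (al n ω)⁻¹ := by
    intro n ω
    have h2 : (1 : ℝ) + a n ω ≠ 0 := by have := ha0 n ω; intro hh; linarith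
    rw [hal_succ, mul_inv, mul_assoc, inv_mul_cancel₀ h2, mul_one]
  have he0 : ∀ M n ω, (0 : ℝ) ≤ e M n ω := by
    intro M n ω; simp only [he]; split <;> norm_num
  have he1 : ∀ M n ω, e M n ω ≤ 1 := by
    intro M n ω; simp only [he]; split <;> norm_num
  have hS0 : ∀ n ω, (0 : ℝ) ≤ S n ω := fun n ω =>
    Finset.sum_nonneg fun k _ => mul_nonneg (hinv0 _ ω) (hc0 k ω)
  have hT0 : ∀ n ω, (0 : ℝ) ≤ T n ω := fun n ω =>
    Finset.sum_nonneg fun k _ => mul_nonneg (hinv0 _ ω) (hB0 k ω)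
  have hU0 : ∀ n ω, (0 : ℝ) ≤ U n ω := fun n ω => mul_nonneg (hinv0 n ω) (hV0 n ω)
  have hS_succ : ∀ n ω, S (n + 1) ω = S n ω + (al (n + 1) ω)⁻¹ * c n ω := fun n ω =>
    Finset.sum_range_succ _ n
  have hT_succ : ∀ n ω, T (n + 1) ω = T n ω + (al (n + 1) ω)⁻¹ * B n ω := fun n ω =>
    Finset.sum_range_succ _ n
  have hY_succ : ∀ M n ω, Y M (n + 1) ω = Y M n ω + (P M n ω + Q M n ω) := by
    intro M n ω
    simp only [hY, hP, hQ, hU, Finset.sum_range_succ]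
    ring
  have hec : ∀ M n ω, e M n ω * ((al (n + 1) ω)⁻¹ * c n ω) ≤ (M : ℝ) := by
    intro M n ω
    simp only [he]
    split
    · rename_i h
      have h1 := hS0 n ω
      have h2 := hS_succ n ω
      linarith
    · simp [Nat.cast_nonneg]
  -- measurability
  have haM : ∀ k m : ℕ, k ≤ m → Measurable[ℱ m] (a k) := fun k m h =>
    (haadapt k).measurable.mono (ℱ.mono h) le_rfl
  have hcM : ∀ k m : ℕ, k ≤ m → Measurable[ℱ m] (c k) := fun k m h =>
    (hcadapt k).measurable.mono (ℱ.mono h) le_rfl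
  have hBM : ∀ k m : ℕ, k ≤ m → Measurable[ℱ m] (B k) := fun k m h =>
    (hBadapt k).measurable.mono (ℱ.mono h) le_rfl
  have hVM : ∀ k m : ℕ, k ≤ m → Measurable[ℱ m] (V k) := fun k m h =>
    (hVadapt k).measurable.mono (ℱ.mono h) le_rfl
  have halM : ∀ n m : ℕ, n ≤ m + 1 → Measurable[ℱ m] (al n) := by
    intro n m h
    simp only [hal]
    exact Finset.measurable_prod _ fun k hk =>
      measurable_const.add (haM k m (by simp only [Finset.mem_range] at hk; omega))
  have hSM : ∀ n m : ℕ, n ≤ m + 1 → Measurable[ℱ m] (S n) := by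
    intro n m h
    simp only [hSdef]
    exact Finset.measurable_sum _ fun k hk =>
      ((halM (k + 1) m (by simp only [Finset.mem_range] at hk; omega)).inv).mul
        (hcM k m (by simp only [Finset.mem_range] at hk; omega))
  have hUM : ∀ n m : ℕ, n ≤ m → Measurable[ℱ m] (U n) := by
    intro n m h
    simp only [hU]
    exact ((halM n m (by omega)).inv).mul (hVM n m h)
  have heM : ∀ M n m : ℕ, n ≤ m → Measurable[ℱ m] (e M n) := by
    intro M n m h
    simp only [he]
    exact Measurable.ite (measurableSet_le (hSM (n + 1) m (by omega)) measurable_const)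
      measurable_const measurable_const
  have hQM : ∀ M n : ℕ, Measurable[ℱ n] (Q M n) := by
    intro M n
    simp only [hQ]
    exact (heM M n n le_rfl).mul
      ((((halM (n + 1) n le_rfl).inv).mul ((hBM n n le_rfl).sub (hcM n n le_rfl))).sub
        (hUM n n le_rfl))
  have hYM : ∀ M n : ℕ, Measurable[ℱ n] (Y M n) := by
    intro M n
    simp only [hY]
    refine (hVM 0 n (Nat.zero_le n)).add ?_
    refine Finset.measurable_sum _ fun k hk => ?_
    simp only [Finset.mem_range] at hk
    exact (heM M k n (by omega)).mul
      (((hUM (k + 1) n (by omega)).add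
        (((halM (k + 1) n (by omega)).inv).mul ((hBM k n (by omega)).sub (hcM k n (by omega))))).sub
        (hUM k n (by omega)))
  -- integrability
  have hUint : ∀ n, Integrable (U n) μ := by
    intro n
    simp only [hU]
    exact (hVint n).bdd_mul
      (((halM n n (by omega)).inv.mono (ℱ.le n) le_rfl).aestronglyMeasurable)
      (ae_of_all μ fun ω => by rw [Real.norm_eq_abs, abs_of_nonneg (hinv0 n ω)]; exact hinv1 n ω)
  have hPint : ∀ M n, Integrable (P M n) μ := by
    intro M n
    simp only [hP]
    refine (hVint (n + 1)).bdd_mul (c := 1) ?_ ?_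
    · exact (((heM M n n le_rfl).mul (halM (n + 1) n le_rfl).inv).mono (ℱ.le n)
        le_rfl).aestronglyMeasurable
    · refine ae_of_all μ fun ω => ?_
      rw [Real.norm_eq_abs, abs_of_nonneg (mul_nonneg (he0 M n ω) (hinv0 _ ω))]
      calc e M n ω * (al (n + 1) ω)⁻¹ ≤ 1 * 1 :=
            mul_le_mul (he1 M n ω) (hinv1 _ ω) (hinv0 _ ω) zero_le_one
        _ = 1 := one_mul 1
  have hBle : ∀ n, ∀ᵐ ω ∂μ, B n ω ≤ (1 + a n ω) * V n ω + c n ω := by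
    intro n
    have h0 : (0 : Ω → ℝ) ≤ᵐ[μ] μ[V (n + 1)|ℱ n] :=
      condExp_nonneg (ae_of_all μ fun ω => hV0 (n + 1) ω)
    filter_upwards [h0, hrec n] with ω h1 h2
    simp only [Pi.zero_apply] at h1
    linarith
  have hQbd : ∀ M n, ∀ᵐ ω ∂μ, ‖Q M n ω‖ ≤ 2 * U n ω + 2 * (M : ℝ) := by
    intro M n
    filter_upwards [hBle n] with ω hB'
    have hU' := hU0 n ω
    have hinv' := hinv0 (n + 1) ω
    have hec' := hec M n ω
    have he0' := he0 M n ω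
    have he1' := he1 M n ω
    have heB : e M n ω * ((al (n + 1) ω)⁻¹ * B n ω) ≤ U n ω + (M : ℝ) := by
      have h1 : (al (n + 1) ω)⁻¹ * B n ω ≤
          (al (n + 1) ω)⁻¹ * ((1 + a n ω) * V n ω + c n ω) :=
        mul_le_mul_of_nonneg_left hB' hinv'
      have h2 : (al (n + 1) ω)⁻¹ * ((1 + a n ω) * V n ω) = U n ω := by
        simp only [hU]; rw [← hkey n ω]; ring
      have h3 : e M n ω * ((al (n + 1) ω)⁻¹ * B n ω) ≤
          e M n ω * (U n ω + (al (n + 1) ω)⁻¹ * c n ω) := by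
        refine mul_le_mul_of_nonneg_left ?_ he0'
        calc (al (n + 1) ω)⁻¹ * B n ω ≤ (al (n + 1) ω)⁻¹ * ((1 + a n ω) * V n ω + c n ω) := h1
          _ = U n ω + (al (n + 1) ω)⁻¹ * c n ω := by rw [← h2]; ring
      have h4 : e M n ω * (U n ω + (al (n + 1) ω)⁻¹ * c n ω) =
          e M n ω * U n ω + e M n ω * ((al (n + 1) ω)⁻¹ * c n ω) := by ring
      have h5 : e M n ω * U n ω ≤ U n ω := by nlinarith
      linarith
    have heC : (0 : ℝ) ≤ e M n ω * ((al (n + 1) ω)⁻¹ * c n ω) :=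
      mul_nonneg he0' (mul_nonneg hinv' (hc0 n ω))
    have heBnn : (0 : ℝ) ≤ e M n ω * ((al (n + 1) ω)⁻¹ * B n ω) :=
      mul_nonneg he0' (mul_nonneg hinv' (hB0 n ω))
    have heU : e M n ω * U n ω ≤ U n ω := by nlinarith
    have heUnn : (0 : ℝ) ≤ e M n ω * U n ω := mul_nonneg he0' hU'
    have hQeq : Q M n ω = e M n ω * ((al (n + 1) ω)⁻¹ * B n ω)
        - e M n ω * ((al (n + 1) ω)⁻¹ * c n ω) - e M n ω * U n ω := by
      simp only [hQ]; ring
    rw [Real.norm_eq_abs, hQeq, abs_le]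
    constructor <;> linarith
  have hQint : ∀ M n, Integrable (Q M n) μ := by
    intro M n
    refine Integrable.mono' (((hUint n).const_mul 2).add (integrable_const (2 * (M : ℝ)))) ?_
      (hQbd M n)
    exact (((hQM M n).mono (ℱ.le n) le_rfl).stronglyMeasurable).aestronglyMeasurable
  have hYint : ∀ M n, Integrable (Y M n) μ := by
    intro M n
    induction n with
    | zero =>
        have : Y M 0 = V 0 := by funext ω; simp [hY]
        rw [this]; exact hVint 0
    | succ n ih =>
        have : Y M (n + 1) = fun ω => Y M n ω + (P M n ω + Q M n ω) := by
          funext ω; exact hY_succ M n ω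
        rw [this]
        exact ih.add ((hPint M n).add (hQint M n))
  -- supermartingale property
  have hsuper : ∀ M, Supermartingale (Y M) ℱ μ := by
    intro M
    refine supermartingale_nat (fun n => ((hYM M n).stronglyMeasurable)) (hYint M) ?_
    intro n
    have hsplit : Y M (n + 1) = Y M n + (P M n + Q M n) := by
      funext ω; exact hY_succ M n ω
    have h1 : μ[Y M (n + 1)|ℱ n] =ᵐ[μ] μ[Y M n|ℱ n] + μ[(P M n + Q M n)|ℱ n] := by
      rw [hsplit]; exact condExp_add (hYint M n) ((hPint M n).add (hQint M n)) _
    have h2 : μ[(P M n + Q M n)|ℱ n] =ᵐ[μ] μ[P M n|ℱ n] + μ[Q M n|ℱ n] :=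
      condExp_add (hPint M n) (hQint M n) _
    have h3 : μ[Y M n|ℱ n] = Y M n :=
      condExp_of_stronglyMeasurable (ℱ.le n) ((hYM M n).stronglyMeasurable) (hYint M n)
    have h4 : μ[Q M n|ℱ n] = Q M n :=
      condExp_of_stronglyMeasurable (ℱ.le n) ((hQM M n).stronglyMeasurable) (hQint M n)
    have h5 : μ[P M n|ℱ n] =ᵐ[μ]
        (fun ω => e M n ω * (al (n + 1) ω)⁻¹) * μ[V (n + 1)|ℱ n] := by
      have hfm : StronglyMeasurable[ℱ n] (fun ω => e M n ω * (al (n + 1) ω)⁻¹) :=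
        ((heM M n n le_rfl).mul (halM (n + 1) n le_rfl).inv).stronglyMeasurable
      have hint : Integrable ((fun ω => e M n ω * (al (n + 1) ω)⁻¹) * V (n + 1)) μ := by
        have := hPint M n
        exact this
      have := condExp_mul_of_stronglyMeasurable_left hfm hint (hVint (n + 1))
      refine EventuallyEq.trans ?_ this
      have : P M n = (fun ω => e M n ω * (al (n + 1) ω)⁻¹) * V (n + 1) := by
        funext ω; simp [hP]
      rw [this]
    filter_upwards [h1, h2, h5, hrec n] with ω e1 e2 e5 e6
    have e3 : (μ[Y M n|ℱ n]) ω = Y M n ω := congrFun h3 ω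
    have e4 : (μ[Q M n|ℱ n]) ω = Q M n ω := congrFun h4 ω
    have hg0 : (0 : ℝ) ≤ e M n ω * (al (n + 1) ω)⁻¹ :=
      mul_nonneg (he0 M n ω) (hinv0 _ ω)
    have h6 : (e M n ω * (al (n + 1) ω)⁻¹) * (μ[V (n + 1)|ℱ n]) ω ≤
        (e M n ω * (al (n + 1) ω)⁻¹) * ((1 + a n ω) * V n ω - B n ω + c n ω) :=
      mul_le_mul_of_nonneg_left e6 hg0
    have h7 : (e M n ω * (al (n + 1) ω)⁻¹) * ((1 + a n ω) * V n ω - B n ω + c n ω) =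
        -Q M n ω := by
      have key := hkey n ω
      simp only [hQ, hU]
      linear_combination (e M n ω * V n ω) * key
    simp only [Pi.add_apply, Pi.mul_apply] at e1 e2 e5
    rw [e1, e3, e2, e4, e5]
    linarith
  -- the invariant : the stopped process agrees with X while S ≤ M, and is bounded below
  have hX_lb : ∀ n ω, -S n ω ≤ X n ω := by
    intro n ω
    simp only [hX]
    have := hU0 n ω; have := hT0 n ω
    linarith
  have hXval : ∀ ω, X 0 ω = V 0 ω := by
    intro ω
    simp only [hX, hU, hSdef, hTdef, hal]
    simp
  have hinvar : ∀ (M n : ℕ) (ω : Ω), (S n ω ≤ (M : ℝ) → Y M n ω = X n ω) ∧ -(M : ℝ) ≤ Y M n ω := by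
    intro M n ω
    induction n with
    | zero =>
        constructor
        · intro _
          simp only [hY, Finset.range_zero, Finset.sum_empty, add_zero]
          exact (hXval ω).symm
        · have h1 : Y M 0 ω = V 0 ω := by
            simp [hY]
          rw [h1]
          have := hV0 0 ω
          have : (0 : ℝ) ≤ (M : ℝ) := Nat.cast_nonneg M
          linarith [hV0 0 ω]
    | succ n ih =>
        by_cases h : S (n + 1) ω ≤ (M : ℝ)
        · have hSn : S n ω ≤ (M : ℝ) := by
            have := hS_succ n ω
            have := mul_nonneg (hinv0 (n + 1) ω) (hc0 n ω)
            linarith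
          have hYn := ih.1 hSn
          have hPQ : P M n ω + Q M n ω = X (n + 1) ω - X n ω := by
            have he' : e M n ω = 1 := by simp only [he]; rw [if_pos h]
            simp only [hP, hQ, hX, hU, hS_succ n ω, hT_succ n ω, he']
            ring
          have hYX : Y M (n + 1) ω = X (n + 1) ω := by
            rw [hY_succ M n ω, hYn, hPQ]; ring
          refine ⟨fun _ => hYX, ?_⟩
          rw [hYX]
          have := hX_lb (n + 1) ω
          linarith
        · have he' : e M n ω = 0 := by simp only [he]; rw [if_neg h]
          have hPQ : P M n ω + Q M n ω = 0 := by
            simp only [hP, hQ, he']; ring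
          have hYY : Y M (n + 1) ω = Y M n ω := by rw [hY_succ M n ω, hPQ, add_zero]
          refine ⟨fun h' => absurd h' h, ?_⟩
          rw [hYY]; exact ih.2
  -- L¹ bound
  have hEY : ∀ M n, ∫ ω, Y M n ω ∂μ ≤ ∫ ω, V 0 ω ∂μ := by
    intro M n
    have h1 := (hsuper M).2.1 0 n (Nat.zero_le n)
    have h2 : ∫ ω, Y M n ω ∂μ = ∫ ω, (μ[Y M n|ℱ 0]) ω ∂μ :=
      (integral_condExp (ℱ.le 0)).symm
    have h3 : ∫ ω, (μ[Y M n|ℱ 0]) ω ∂μ ≤ ∫ ω, Y M 0 ω ∂μ :=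
      integral_mono_ae integrable_condExp (hYint M 0) h1
    have h4 : Y M 0 = V 0 := by funext ω; simp [hY]
    rw [h2, ← h4]
    exact h3
  have hL1 : ∀ M n, eLpNorm (Y M n) 1 μ ≤
      ENNReal.ofReal (∫ ω, V 0 ω ∂μ + 2 * (M : ℝ)) := by
    intro M n
    have habs : ∀ ω, |Y M n ω| ≤ Y M n ω + 2 * (M : ℝ) := by
      intro ω
      have h := (hinvar M n ω).2
      have hM0 : (0 : ℝ) ≤ (M : ℝ) := Nat.cast_nonneg M
      rcases le_or_gt 0 (Y M n ω) with h1 | h1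
      · rw [abs_of_nonneg h1]; linarith
      · rw [abs_of_neg h1]; linarith
    have hint : ∫ ω, |Y M n ω| ∂μ ≤ ∫ ω, V 0 ω ∂μ + 2 * (M : ℝ) := by
      have h1 : ∫ ω, |Y M n ω| ∂μ ≤ ∫ ω, (Y M n ω + 2 * (M : ℝ)) ∂μ :=
        integral_mono_ae (hYint M n).abs ((hYint M n).add (integrable_const _))
          (ae_of_all μ habs)
      have h2 : ∫ ω, (Y M n ω + 2 * (M : ℝ)) ∂μ = (∫ ω, Y M n ω ∂μ) + 2 * (M : ℝ) := by
        rw [integral_add (hYint M n) (integrable_const _), integral_const]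
        simp
      rw [h2] at h1
      linarith [hEY M n]
    calc eLpNorm (Y M n) 1 μ = ENNReal.ofReal (∫ ω, ‖Y M n ω‖ ∂μ) := by
          rw [eLpNorm_one_eq_lintegral_enorm,
            ← ofReal_integral_norm_eq_lintegral_enorm (hYint M n)]
      _ ≤ ENNReal.ofReal (∫ ω, V 0 ω ∂μ + 2 * (M : ℝ)) := by
          refine ENNReal.ofReal_le_ofReal ?_
          simpa only [Real.norm_eq_abs] using hint
  -- a.s. convergence of each stopped process
  have hconv : ∀ M : ℕ, ∀ᵐ ω ∂μ, ∃ l, Tendsto (fun n => Y M n ω) atTop (𝓝 l) := by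
    intro M
    set R : NNReal := (∫ ω, V 0 ω ∂μ + 2 * (M : ℝ)).toNNReal with hR
    have hsub : Submartingale (-(Y M)) ℱ μ := (hsuper M).neg
    have hbdd : ∀ n, eLpNorm ((-(Y M)) n) 1 μ ≤ (R : ℝ≥0∞) := by
      intro n
      have : (-(Y M)) n = -(Y M n) := rfl
      rw [this, eLpNorm_neg]
      refine le_trans (hL1 M n) ?_
      rw [hR]
      rfl
    have := hsub.exists_ae_tendsto_of_bdd hbdd
    filter_upwards [this] with ω hω
    obtain ⟨l, hl⟩ := hω
    refine ⟨-l, ?_⟩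
    have : (fun n => Y M n ω) = fun n => -((-(Y M)) n ω) := by
      funext n; simp
    rw [this]
    exact hl.neg
  -- pointwise conclusion
  filter_upwards [hsa, hsc, ae_all_iff.2 hconv] with ω hsa' hsc' hYconv
  -- summability of the weighted c-series
  have hsumc : Summable (fun k => (al (k + 1) ω)⁻¹ * c k ω) := by
    refine Summable.of_nonneg_of_le (fun k => mul_nonneg (hinv0 _ ω) (hc0 k ω))
      (fun k => ?_) hsc'
    calc (al (k + 1) ω)⁻¹ * c k ω ≤ 1 * c k ω :=
          mul_le_mul_of_nonneg_right (hinv1 _ ω) (hc0 k ω)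
      _ = c k ω := one_mul _
  have hSle : ∀ n, S n ω ≤ ∑' k, (al (k + 1) ω)⁻¹ * c k ω := fun n =>
    Summable.sum_le_tsum (Finset.range n) (fun k _ => mul_nonneg (hinv0 _ ω) (hc0 k ω)) hsumc
  obtain ⟨M, hM⟩ := exists_nat_ge (∑' k, (al (k + 1) ω)⁻¹ * c k ω)
  have hYX : ∀ n, Y M n ω = X n ω := fun n =>
    (hinvar M n ω).1 ((hSle n).trans hM)
  obtain ⟨L, hL⟩ := hYconv M
  have hXconv : Tendsto (fun n => X n ω) atTop (𝓝 L) := by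
    have : (fun n => X n ω) = fun n => Y M n ω := by funext n; rw [hYX n]
    rw [this]; exact hL
  -- convergence of S
  have hSconv : Tendsto (fun n => S n ω) atTop (𝓝 (∑' k, (al (k + 1) ω)⁻¹ * c k ω)) :=
    hsumc.hasSum.tendsto_sum_nat
  -- convergence of al
  have halmono : Monotone (fun n => al n ω) := by
    refine monotone_nat_of_le_succ fun n => ?_
    rw [hal_succ]
    nlinarith [hal_pos n ω, ha0 n ω]
  have halbd : ∀ n, al n ω ≤ Real.exp (∑' k, a k ω) := by
    intro n
    have h1 : al n ω ≤ ∏ k ∈ Finset.range n, Real.exp (a k ω) := by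
      refine Finset.prod_le_prod (fun k _ => by linarith [ha0 k ω]) fun k _ => ?_
      have := Real.add_one_le_exp (a k ω)
      linarith
    have h2 : ∏ k ∈ Finset.range n, Real.exp (a k ω) =
        Real.exp (∑ k ∈ Finset.range n, a k ω) := (Real.exp_sum _ _).symm
    have h3 : ∑ k ∈ Finset.range n, a k ω ≤ ∑' k, a k ω :=
      Summable.sum_le_tsum (Finset.range n) (fun k _ => ha0 k ω) hsa'
    calc al n ω ≤ ∏ k ∈ Finset.range n, Real.exp (a k ω) := h1
      _ = Real.exp (∑ k ∈ Finset.range n, a k ω) := h2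
      _ ≤ Real.exp (∑' k, a k ω) := Real.exp_le_exp.2 h3
  have halconv : Tendsto (fun n => al n ω) atTop (𝓝 (⨆ n, al n ω)) :=
    tendsto_atTop_ciSup halmono ⟨Real.exp (∑' k, a k ω), fun x ⟨n, hn⟩ => hn ▸ halbd n⟩
  -- summability of weighted B series
  have hXbdd : BddAbove (Set.range fun n => X n ω) := hXconv.bddAbove_range
  obtain ⟨CX, hCX⟩ := hXbdd
  have hTsum : Summable (fun k => (al (k + 1) ω)⁻¹ * B k ω) := by
    refine summable_of_sum_range_le (fun k => mul_nonneg (hinv0 _ ω) (hB0 k ω))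
      (c := CX + ∑' k, (al (k + 1) ω)⁻¹ * c k ω) fun n => ?_
    have h1 : T n ω = X n ω - U n ω + S n ω := by simp only [hX]; ring
    have h2 : X n ω ≤ CX := hCX ⟨n, rfl⟩
    have h3 := hU0 n ω
    have h4 := hSle n
    calc (∑ k ∈ Finset.range n, (al (k + 1) ω)⁻¹ * B k ω) = T n ω := rfl
      _ = X n ω - U n ω + S n ω := h1
      _ ≤ CX + ∑' k, (al (k + 1) ω)⁻¹ * c k ω := by linarith
  have hsumB : Summable (fun k => B k ω) := by
    refine Summable.of_nonneg_of_le (fun k => hB0 k ω) (fun k => ?_)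
      (hTsum.mul_left (Real.exp (∑' k, a k ω)))
    have h2 := mul_le_mul_of_nonneg_right (halbd (k + 1))
      (mul_nonneg (hinv0 (k + 1) ω) (hB0 k ω))
    rwa [← mul_assoc, mul_inv_cancel₀ (hal_pos (k + 1) ω).ne', one_mul] at h2
  -- convergence of T, U, V
  have hTconv : Tendsto (fun n => T n ω) atTop (𝓝 (∑' k, (al (k + 1) ω)⁻¹ * B k ω)) :=
    hTsum.hasSum.tendsto_sum_nat
  have hUconv : Tendsto (fun n => U n ω) atTop
      (𝓝 (L - (∑' k, (al (k + 1) ω)⁻¹ * B k ω) + ∑' k, (al (k + 1) ω)⁻¹ * c k ω)) := by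
    have : (fun n => U n ω) = fun n => X n ω - T n ω + S n ω := by
      funext n; simp only [hX]; ring
    rw [this]
    exact (hXconv.sub hTconv).add hSconv
  have hVconv : Tendsto (fun n => V n ω) atTop
      (𝓝 ((⨆ n, al n ω) *
        (L - (∑' k, (al (k + 1) ω)⁻¹ * B k ω) + ∑' k, (al (k + 1) ω)⁻¹ * c k ω))) := by
    have : (fun n => V n ω) = fun n => al n ω * U n ω := by
      funext n
      simp only [hU]
      rw [← mul_assoc, mul_inv_cancel₀ (hal_pos n ω).ne', one_mul]
    rw [this]
    exact halconv.mul hUconv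
  exact ⟨⟨_, hVconv⟩, hsumB⟩
end
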